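/- arXiv:1601.07763 — 5 statements merged into one kernel-verified Lean document; each statement's English description precedes it below -/
import Mathlib

section
/- Let P : E' → E be a covering projection between path connected topological spaces. If E is a CW-complex, then E' is a CW-complex; moreover, the n-th skeleton of E' is the preimage under P of the n-th skeleton of E, and the restriction of P to each skeleton is again a covering projection. -/
open Topology Metric Set

universe u

/-- A (classical, Hatcher-style) CW-structure on a topological space `X`:
cells in each dimension with characteristic maps from closed Euclidean disks,
satisfying the usual axioms (open cells partition `X`, characteristic maps are
embeddings on open disks, boundaries attach to finitely many lower-dimensional cells,
and `X` carries the weak topology). -/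
structure CWStructure (X : Type u) [TopologicalSpace X] : Type (u + 1) where
  /-- index types of the `n`-cells -/
  cell : ℕ → Type u
  /-- characteristic maps defined on the closed unit disk of `ℝⁿ` -/
  map : ∀ n, cell n → EuclideanSpace ℝ (Fin n) → X
  continuousOn : ∀ n (i : cell n), ContinuousOn (map n i) (closedBall 0 1)
  isEmbedding_restrict : ∀ n (i : cell n),
    IsEmbedding ((ball (0 : EuclideanSpace ℝ (Fin n)) 1).restrict (map n i))
  pairwiseDisjoint : ∀ (c c' : Σ n, cell n), c ≠ c' →
    Disjoint (map c.1 c.2 '' ball 0 1) (map c'.1 c'.2 '' ball 0 1)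
  iUnion_cells : (⋃ (n : ℕ) (i : cell n), map n i '' ball 0 1) = univ
  boundary_subset : ∀ n (i : cell n),
    map n i '' sphere 0 1 ⊆ ⋃ (m : ℕ) (_ : m < n) (j : cell m), map m j '' ball 0 1
  closure_finite : ∀ n (i : cell n), ∃ S : Finset (Σ m, cell m),
    map n i '' sphere 0 1 ⊆ ⋃ c ∈ S, map c.1 c.2 '' ball 0 1
  weak_topology : ∀ A : Set X,
    IsClosed A ↔ ∀ n (i : cell n), IsClosed (map n i ⁻¹' A ∩ closedBall 0 1)
  t2 : T2Space X

namespace CWStructure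

variable {X : Type u} [TopologicalSpace X]

/-- The `n`-skeleton of a CW-structure: the union of all cells of dimension `≤ n`. -/
def skeleton (S : CWStructure X) (n : ℕ) : Set X :=
  ⋃ (m : ℕ) (_ : m ≤ n) (i : S.cell m), S.map m i '' closedBall 0 1

/-- The CW-structure `S` has dimension at most `d`. -/
def DimLE (S : CWStructure X) (d : ℕ) : Prop := ∀ n, d < n → IsEmpty (S.cell n)

end CWStructure

/-- `X` has the homotopy type of a CW-complex. -/
def HasCWHomotopyType (X : Type u) [TopologicalSpace X] : Prop :=
  ∃ (C : Type u) (_ : TopologicalSpace C),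
    Nonempty (CWStructure C) ∧ Nonempty (ContinuousMap.HomotopyEquiv X C)

/-- `X` has the homotopy type of a finite-dimensional CW-complex. -/
def HasFinDimCWHomotopyType (X : Type u) [TopologicalSpace X] : Prop :=
  ∃ (C : Type u) (_ : TopologicalSpace C) (S : CWStructure C) (d : ℕ),
    S.DimLE d ∧ Nonempty (ContinuousMap.HomotopyEquiv X C)



section Aux

variable {E' E : Type u} [TopologicalSpace E'] [TopologicalSpace E] {P : E' → E}

theorem IsCoveringMap.t2space_of_t2space (hP : IsCoveringMap P) (h2 : T2Space E) :
    T2Space E' := by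
  constructor
  intro x y hne
  by_cases h : P x = P y
  · exact hP.isSeparatedMap x y h hne
  · obtain ⟨u, v, hu, hv, hxu, hyv, huv⟩ := t2_separation h
    exact ⟨P ⁻¹' u, P ⁻¹' v, hu.preimage hP.continuous, hv.preimage hP.continuous, hxu, hyv,
      huv.preimage P⟩

noncomputable def IsCoveringMap.triv (hP : IsCoveringMap P) (z : E') :
    Bundle.Trivialization ↥(P ⁻¹' {P z}) P :=
  haveI : Nonempty ↥(P ⁻¹' {P z}) := ⟨⟨z, rfl⟩⟩
  (hP (P z)).toTrivialization

theorem IsCoveringMap.mem_triv_baseSet (hP : IsCoveringMap P) (z : E') :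
    P z ∈ (hP.triv z).baseSet :=
  haveI : Nonempty ↥(P ⁻¹' {P z}) := ⟨⟨z, rfl⟩⟩
  (hP (P z)).mem_toTrivialization_baseSet

/-- A sheet of the covering through a given point `z₀`: an open set `V ∋ z₀` mapped
homeomorphically (with continuous section `σ` defined on open `U`) onto `U`. -/
theorem IsCoveringMap.sheet_exists (hP : IsCoveringMap P) (z₀ : E') :
    ∃ (U : Set E) (V : Set E') (σ : E → E'),
      IsOpen U ∧ IsOpen V ∧ z₀ ∈ V ∧ ContinuousOn σ U ∧
      (∀ u ∈ U, P (σ u) = u) ∧ (∀ u ∈ U, σ u ∈ V) ∧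
      (∀ w ∈ V, P w ∈ U) ∧ (∀ w ∈ V, σ (P w) = w) := by
  obtain ⟨hd, T, hb⟩ : DiscreteTopology ↥(P ⁻¹' {P z₀}) ∧
      ∃ T : Bundle.Trivialization ↥(P ⁻¹' {P z₀}) P, P z₀ ∈ T.baseSet :=
    ⟨(hP (P z₀)).1, hP.triv z₀, hP.mem_triv_baseSet z₀⟩
  classical
  set κ := (T z₀).2 with hκ
  refine ⟨T.baseSet, T.source ∩ (fun w => (T w).2) ⁻¹' {κ}, fun u => T.toOpenPartialHomeomorph.symm (u, κ),
    T.open_baseSet, ?_, ⟨T.mem_source.2 hb, rfl⟩, ?_, ?_, ?_, ?_, ?_⟩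
  · exact T.continuousOn_toFun.isOpen_inter_preimage T.open_source
      ((continuous_snd.isOpen_preimage _ (isOpen_discrete _)))
  · have : Continuous fun u : E => (u, κ) := continuous_id.prodMk continuous_const
    refine (T.toOpenPartialHomeomorph.continuousOn_symm.comp this.continuousOn ?_)
    intro u hu
    exact T.mem_target.2 hu
  · intro u hu
    exact T.proj_symm_apply (T.mem_target.2 hu)
  · intro u hu
    have ht : (u, κ) ∈ T.target := T.mem_target.2 hu
    refine ⟨T.toOpenPartialHomeomorph.map_target ht, ?_⟩
    simp only [mem_preimage, mem_singleton_iff]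
    rw [show T (T.toOpenPartialHomeomorph.symm (u, κ)) = T.toOpenPartialHomeomorph
        (T.toOpenPartialHomeomorph.symm (u, κ)) from rfl, T.toOpenPartialHomeomorph.right_inv ht]
  · intro w hw
    exact T.mem_source.1 hw.1
  · intro w hw
    have h1 : T w = (P w, κ) := by
      have h2 := T.mk_proj_snd hw.1
      have h3 : (T w).2 = κ := hw.2
      rw [← h2, h3]
    calc T.toOpenPartialHomeomorph.symm (P w, κ) = T.toOpenPartialHomeomorph.symm (T w) := by rw [h1]
    _ = w := T.toOpenPartialHomeomorph.left_inv hw.1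

end Aux


section HLP

variable {E' E : Type u} [TopologicalSpace E'] [TopologicalSpace E] {P : E' → E}

variable {B : Type*} [MetricSpace B] [CompactSpace B]

theorem IsCoveringMap.exists_lift_homotopy (hP : IsCoveringMap P)
    (H : B × ℝ → E) (hH : Continuous H) (h₀ : B → E') (hh₀ : Continuous h₀)
    (hlift : ∀ x, P (h₀ x) = H (x, 0)) :
    ∃ G : B × ℝ → E', Continuous G ∧ (∀ x s, P (G (x, s)) = H (x, max 0 (min s 1))) ∧
      (∀ x s, s ≤ 0 → G (x, s) = h₀ x) := by
  classical
  have hRc : IsClosed (range P) := by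
    rw [← isOpen_compl_iff, isOpen_iff_mem_nhds]
    intro e he
    obtain ⟨_, U, heU, hUo, _, Hh, _⟩ := hP e
    refine Filter.mem_of_superset (hUo.mem_nhds heU) ?_
    rintro u hu ⟨w, rfl⟩
    exact he ⟨((Hh ⟨w, hu⟩).2 : E'), (Hh ⟨w, hu⟩).2.2⟩
  have hrange : ∀ p : B × ℝ, H p ∈ range P := by
    rintro ⟨x, s⟩
    have hcl : IsClopen ((fun t : ℝ => H (x, t)) ⁻¹' range P) :=
      ⟨hRc.preimage (hH.comp (continuous_const.prodMk continuous_id)),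
       hP.isOpenMap.isOpen_range.preimage (hH.comp (continuous_const.prodMk continuous_id))⟩
    have := hcl.eq_univ ⟨0, h₀ x, hlift x⟩
    exact Set.eq_univ_iff_forall.1 this s
  obtain ⟨δ, hδ0, hδ⟩ :=
    lebesgue_number_lemma_of_metric (s := (univ : Set B) ×ˢ Icc (0:ℝ) 1)
      (c := fun e : E' => H ⁻¹' (hP.triv e).baseSet)
      (isCompact_univ.prod isCompact_Icc)
      (fun e => ((hP.triv e).open_baseSet).preimage hH)
      (fun p _ => by
        obtain ⟨z, hz⟩ := hrange p
        exact mem_iUnion.2 ⟨z, by rw [mem_preimage, ← hz]; exact hP.mem_triv_baseSet z⟩)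
  obtain ⟨m', hm'⟩ := exists_nat_one_div_lt hδ0
  set m : ℕ := m' + 1 with hm
  have hmpos : (0:ℝ) < m := by positivity
  have hinv : 1 / (m:ℝ) < δ := by
    have : ((m':ℝ) + 1) = (m:ℝ) := by rw [hm]; push_cast; ring
    rw [← this]; exact hm'
  have h2m : 1 / (2*(m:ℝ)) < δ / 2 := by
    have h : 1 / (2*(m:ℝ)) = (1/m)/2 := by ring
    rw [h]
    linarith
  have h2mpos : (0:ℝ) < 1/(2*m) := by positivity
  have main : ∀ i : ℕ, i ≤ m → ∃ G : B × ℝ → E', Continuous G ∧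
      (∀ x s, P (G (x, s)) = H (x, max 0 (min s ((i:ℝ)/m)))) ∧
      (∀ x s, s ≤ 0 → G (x, s) = h₀ x) := by
    intro i
    induction i with
    | zero =>
      intro _
      refine ⟨fun p => h₀ p.1, hh₀.comp continuous_fst, fun x s => ?_, fun x s _ => rfl⟩
      push_cast
      rw [zero_div, max_eq_left (min_le_right _ _), hlift]
    | succ k ih =>
      intro hk1
      obtain ⟨G, hG, hPG, hG0⟩ := ih (Nat.le_of_succ_le hk1)
      set t0 : ℝ := (k:ℝ)/m with ht0def
      set t1 : ℝ := ((k:ℝ)+1)/m with ht1def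
      have ht1eq : t1 = t0 + 1/m := by rw [ht1def, ht0def]; ring
      have h1m0 : (0:ℝ) < 1/m := by positivity
      have ht00 : (0:ℝ) ≤ t0 := by positivity
      have ht01 : t0 < t1 := by rw [ht1eq]; linarith
      have ht11 : t1 ≤ 1 := by
        rw [ht1def, div_le_one hmpos]
        exact_mod_cast hk1
      set c₀ : ℝ := t0 + 1/(2*m) with hc₀def
      have hc₀I : ∀ s : ℝ, s ∈ Icc t0 t1 → |s - c₀| ≤ 1/(2*m) := by
        intro s hs
        have h1 := hs.1
        have h2 := hs.2
        rw [ht1eq] at h2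
        rw [abs_le, hc₀def]
        constructor <;> [linarith; skip]
        have : 1/(2*(m:ℝ)) + 1/(2*m) = 1/m := by field_simp; ring
        linarith
      have sel : ∀ x : B, ∃ e : E', Metric.ball (x, c₀) δ ⊆
          H ⁻¹' (hP.triv e).baseSet := by
        intro x
        apply hδ
        refine ⟨trivial, ?_, ?_⟩ <;> rw [hc₀def]
        · have : 1/(2*(m:ℝ)) ≤ 1/m := by
            apply one_div_le_one_div_of_le hmpos; linarith
          linarith
        · rw [ht1eq] at ht11
          have : 1/(2*(m:ℝ)) + 1/(2*m) = 1/m := by field_simp; ring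
          linarith
      choose e he using sel
      let T := fun x : B => hP.triv (e x)
      have hball : ∀ x y : B, ∀ s : ℝ, dist y x < δ/2 → s ∈ Icc t0 t1 →
          H (y, s) ∈ (T x).baseSet := by
        intro x y s hy hs
        apply he x
        rw [Metric.mem_ball, Prod.dist_eq]
        apply max_lt (by linarith)
        rw [Real.dist_eq]
        have := hc₀I s hs
        linarith
      set mids : ℝ → ℝ := fun s => max t0 (min s t1) with hmidsdef
      have hmids : ∀ s, mids s ∈ Icc t0 t1 :=
        fun s => ⟨le_max_left _ _, max_le ht01.le (min_le_right _ _)⟩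
      have hPGt0 : ∀ y : B, P (G (y, t0)) = H (y, t0) := by
        intro y
        rw [hPG, min_self, max_eq_right ht00]
      have hGt0source : ∀ x y : B, dist y x < δ/2 → G (y, t0) ∈ (T x).source := by
        intro x y h
        rw [Bundle.Trivialization.mem_source, hPGt0]
        exact hball x y t0 h ⟨le_refl _, ht01.le⟩
      set F : B → B × ℝ → E' := fun x p =>
        (T x).toOpenPartialHomeomorph.symm (H (p.1, mids p.2), ((T x) (G (p.1, t0))).2) with hFdef
      have hFcont : ∀ x : B, ContinuousOn (F x) (Metric.ball x (δ/2) ×ˢ (univ : Set ℝ)) := by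
        intro x
        apply (T x).toOpenPartialHomeomorph.continuousOn_symm.comp
        · apply ContinuousOn.prodMk
          · apply Continuous.continuousOn
            exact hH.comp (continuous_fst.prodMk
              (continuous_const.max (continuous_snd.min continuous_const)))
          · apply Continuous.comp_continuousOn continuous_snd
            apply (T x).continuousOn_toFun.comp
              ((hG.comp (continuous_fst.prodMk continuous_const)).continuousOn)
            intro p hp
            exact hGt0source x p.1 (by simpa [Metric.mem_ball] using hp.1)
        · intro p hp
          rw [Bundle.Trivialization.mem_target]
          exact hball x p.1 (mids p.2) (by simpa [Metric.mem_ball] using hp.1) (hmids p.2)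
      have hPF : ∀ x y : B, ∀ s : ℝ, dist y x < δ/2 → P (F x (y, s)) = H (y, mids s) := by
        intro x y s h
        apply (T x).proj_symm_apply
        rw [Bundle.Trivialization.mem_target]
        exact hball x y _ h (hmids s)
      have hFt0 : ∀ x y : B, ∀ s : ℝ, dist y x < δ/2 → s ≤ t0 → F x (y, s) = G (y, t0) := by
        intro x y s h hs
        have hmid : mids s = t0 := by
          rw [hmidsdef]
          simp only []
          rw [min_eq_left (hs.trans ht01.le), max_eq_left hs]
        have hsrc := hGt0source x y h
        show (T x).toOpenPartialHomeomorph.symm (H (y, mids s), ((T x) (G (y, t0))).2) = _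
        rw [hmid, ← hPGt0 y, (T x).mk_proj_snd hsrc]
        exact (T x).toOpenPartialHomeomorph.left_inv hsrc
      have hslice : ∀ x y : B, dist y x < δ/2 → Continuous (fun u : ℝ => F x (y, u)) := by
        intro x y h
        apply (hFcont x).comp_continuous (continuous_const.prodMk continuous_id)
        intro u
        exact ⟨by simpa [Metric.mem_ball] using h, trivial⟩
      have hFeq : ∀ x x' y : B, dist y x < δ/2 → dist y x' < δ/2 →
          ∀ s : ℝ, F x (y, s) = F x' (y, s) := by
        intro x x' y hx hx' s
        have heq : (fun u : ℝ => F x (y, u)) = fun u : ℝ => F x' (y, u) := by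
          apply hP.eq_of_comp_eq (hslice x y hx) (hslice x' y hx') ?_ t0
          · rw [hFt0 x y t0 hx le_rfl, hFt0 x' y t0 hx' le_rfl]
          · funext u
            simp only [Function.comp_apply]
            rw [hPF x y u hx, hPF x' y u hx']
        exact congrFun heq s
      refine ⟨fun p => if p.2 ≤ t0 then G p else F p.1 p, ?_, ?_, ?_⟩
      · rw [continuous_iff_continuousAt]
        intro p₀
        set O : Set (B × ℝ) := Metric.ball p₀.1 (δ/2) ×ˢ (univ : Set ℝ) with hOdef
        have hO : IsOpen O := isOpen_ball.prod isOpen_univ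
        have hmem : p₀ ∈ O := ⟨mem_ball_self (by positivity), trivial⟩
        have heqO : ∀ p ∈ O, (if p.2 ≤ t0 then G p else F p.1 p) =
            (if p.2 ≤ t0 then G p else F p₀.1 p) := by
          intro p hp
          by_cases h : p.2 ≤ t0
          · simp [h]
          · simp only [h, if_false]
            exact hFeq p.1 p₀.1 p.1 (by rw [dist_self]; positivity)
              (by simpa [Metric.mem_ball] using hp.1) p.2
        have hcont2 : ContinuousOn (fun p : B × ℝ => if p.2 ≤ t0 then G p else F p₀.1 p) O := by
          rw [continuousOn_iff_continuous_restrict]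
          apply Continuous.if_le
          · exact hG.comp continuous_subtype_val
          · exact (continuousOn_iff_continuous_restrict.1 (hFcont p₀.1))
          · exact continuous_snd.comp continuous_subtype_val
          · exact continuous_const
          · rintro ⟨⟨y, s⟩, hyO⟩ (hs : s = t0)
            have hd : dist y p₀.1 < δ/2 := by simpa [Metric.mem_ball] using hyO.1
            show G (y, s) = F p₀.1 (y, s)
            rw [hs, hFt0 p₀.1 y t0 hd le_rfl]
        have hca : ContinuousAt (fun p : B × ℝ => if p.2 ≤ t0 then G p else F p₀.1 p) p₀ :=
          hcont2.continuousAt (hO.mem_nhds hmem)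
        apply hca.congr
        exact Filter.eventuallyEq_of_mem (hO.mem_nhds hmem) (fun p hp => (heqO p hp).symm)
      · intro x s
        have hc : (((k+1:ℕ)):ℝ)/(m:ℝ) = t1 := by rw [ht1def]; push_cast; ring
        rw [hc]
        by_cases h : s ≤ t0
        · simp only [h, if_true]
          rw [hPG]
          congr 2
          rw [min_eq_left h, min_eq_left (h.trans ht01.le)]
        · simp only [h, if_false]
          push_neg at h
          rw [hPF x x s (by simpa using (by positivity : (0:ℝ) < δ/2))]
          have h1 : t0 ≤ min s t1 := le_min h.le ht01.le
          congr 2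
          rw [hmidsdef]
          simp only []
          rw [max_eq_right h1, max_eq_right (ht00.trans h1)]
      · intro x s hs
        have : s ≤ t0 := hs.trans ht00
        simp only [this, if_true]
        exact hG0 x s hs
  obtain ⟨G, h1, h2, h3⟩ := main m le_rfl
  refine ⟨G, h1, ?_, h3⟩
  intro x s
  rw [h2 x s, div_self (ne_of_gt hmpos)]

end HLP


section KeyLift

variable {E' E : Type u} [TopologicalSpace E'] [TopologicalSpace E] {P : E' → E}

/-- Lifting of a map of a closed disk along a covering map, through a prescribed point. -/
theorem IsCoveringMap.exists_disk_lift (hP : IsCoveringMap P) {n : ℕ}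
    {Φ : EuclideanSpace ℝ (Fin n) → E} (hΦ : ContinuousOn Φ (closedBall 0 1))
    {x₀ : EuclideanSpace ℝ (Fin n)} (hx₀ : x₀ ∈ closedBall 0 1)
    {z : E'} (hz : P z = Φ x₀) :
    ∃ g : EuclideanSpace ℝ (Fin n) → E', ContinuousOn g (closedBall 0 1) ∧
      (∀ x ∈ closedBall 0 1, P (g x) = Φ x) ∧ g x₀ = z := by
  classical
  set D : Set (EuclideanSpace ℝ (Fin n)) := closedBall 0 1 with hD
  haveI : CompactSpace D := isCompact_iff_compactSpace.1 (isCompact_closedBall 0 1)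
  have hmem : ∀ (x : D) (s : ℝ), x₀ + (max 0 (min s 1)) • ((x : EuclideanSpace ℝ (Fin n)) - x₀) ∈ D := by
    intro x s
    set c := max 0 (min s 1) with hc
    have hc0 : 0 ≤ c := le_max_left _ _
    have hc1 : c ≤ 1 := max_le zero_le_one (min_le_right _ _)
    have : x₀ + c • ((x : EuclideanSpace ℝ (Fin n)) - x₀) =
        (1 - c) • x₀ + c • (x : EuclideanSpace ℝ (Fin n)) := by
      rw [smul_sub, sub_smul, one_smul]
      abel
    rw [this]
    exact convex_closedBall _ _ hx₀ x.2 (by linarith) hc0 (by ring)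
  set H : D × ℝ → E := fun p =>
    Φ (x₀ + (max 0 (min p.2 1)) • ((p.1 : EuclideanSpace ℝ (Fin n)) - x₀)) with hHdef
  have hη : Continuous fun p : D × ℝ =>
      x₀ + (max 0 (min p.2 1)) • ((p.1 : EuclideanSpace ℝ (Fin n)) - x₀) := by
    apply continuous_const.add
    exact (continuous_const.max (continuous_snd.min continuous_const)).smul
      ((continuous_subtype_val.comp continuous_fst).sub continuous_const)
  have hH : Continuous H := hΦ.comp_continuous hη fun p => hmem p.1 p.2
  have hlift : ∀ x : D, P ((fun _ => z) x) = H (x, 0) := by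
    intro x
    rw [hHdef]
    simp only [min_eq_left zero_le_one, max_self, zero_smul, add_zero]
    have : max 0 (min (0:ℝ) 1) = 0 := by rw [min_eq_left zero_le_one, max_self]
    simp [this, hz]
  obtain ⟨G, hG, hPG, hG0⟩ := hP.exists_lift_homotopy H hH (fun _ => z) continuous_const hlift
  refine ⟨fun x => if hx : x ∈ D then G (⟨x, hx⟩, 1) else z, ?_, ?_, ?_⟩
  · rw [continuousOn_iff_continuous_restrict]
    have : (D.domRestrict fun x => if hx : x ∈ D then G (⟨x, hx⟩, 1) else z) =
        fun b : D => G (b, 1) := by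
      funext b
      simp [Set.domRestrict, b.2]
    rw [this]
    exact hG.comp (continuous_id.prodMk continuous_const)
  · intro x hx
    simp only [hx, dif_pos]
    rw [hPG, hHdef]
    have : max 0 (min (1:ℝ) 1) = 1 := by simp
    simp only [this, one_smul]
    congr 1
    abel
  · have hx₀D : x₀ ∈ D := hx₀
    simp only [hx₀D, dif_pos]
    have heq : (fun s : ℝ => G (⟨x₀, hx₀D⟩, s)) = fun _ : ℝ => z := by
      apply hP.eq_of_comp_eq (hG.comp (continuous_const.prodMk continuous_id))
        continuous_const ?_ 0 (hG0 _ 0 le_rfl)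
      funext s
      simp only [Function.comp_apply]
      rw [hPG, hHdef]
      simp [hz]
    exact congrFun heq 1

end KeyLift

section Restrict


variable {E' E : Type u} [TopologicalSpace E'] [TopologicalSpace E] {P : E' → E}

theorem IsCoveringMap.restrict_preimage (hP : IsCoveringMap P) (A : Set E)
    (h : MapsTo P (P ⁻¹' A) A) :
    IsCoveringMap (h.restrict P (P ⁻¹' A) A) := by
  exact hP.restrictPreimage A

end Restrict


namespace LiftCW

variable {E' E : Type u} [TopologicalSpace E'] [TopologicalSpace E]
variable {P : E' → E}

/-- lifts of characteristic maps -/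
def IsLift (P : E' → E) (S : CWStructure E) (n : ℕ) (i : S.cell n)
    (g : EuclideanSpace ℝ (Fin n) → E') : Prop :=
  ContinuousOn g (closedBall 0 1) ∧ ∀ x ∈ closedBall 0 1, P (g x) = S.map n i x

theorem lift_unique (hP : IsCoveringMap P) {n : ℕ} {i : S.cell n} {g g' : EuclideanSpace ℝ (Fin n) → E'}
    (hg : IsLift P S n i g) (hg' : IsLift P S n i g')
    {x₀ : EuclideanSpace ℝ (Fin n)} (hx₀ : x₀ ∈ closedBall 0 1) (h : g x₀ = g' x₀) :
    EqOn g g' (closedBall 0 1) := by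
  apply hP.eqOn_of_comp_eqOn (convex_closedBall _ _).isPreconnected hg.1 hg'.1 ?_ hx₀ h
  intro x hx
  show P (g x) = P (g' x)
  rw [hg.2 x hx, hg'.2 x hx]

theorem exists_lift (hP : IsCoveringMap P) (S : CWStructure E) (n : ℕ) (i : S.cell n) {x₀ : EuclideanSpace ℝ (Fin n)}
    (hx₀ : x₀ ∈ closedBall 0 1) {z : E'} (hz : P z = S.map n i x₀) :
    ∃ g, IsLift P S n i g ∧ g x₀ = z := by
  obtain ⟨g, h1, h2, h3⟩ := hP.exists_disk_lift (S.continuousOn n i) hx₀ hz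
  exact ⟨g, ⟨h1, h2⟩, h3⟩

/-- cells of the lifted CW structure -/
def cellUp (P : E' → E) (S : CWStructure E) (n : ℕ) : Type u := (i : S.cell n) × (P ⁻¹' {S.map n i 0})

theorem zero_mem_cB (n : ℕ) : (0 : EuclideanSpace ℝ (Fin n)) ∈ closedBall (0:EuclideanSpace ℝ (Fin n)) 1 :=
  mem_closedBall_self zero_le_one

noncomputable def mapUp (hP : IsCoveringMap P) (S : CWStructure E) (n : ℕ) (c : cellUp P S n) : EuclideanSpace ℝ (Fin n) → E' :=
  (exists_lift hP S n c.1 (zero_mem_cB n) (show P c.2.1 = S.map n c.1 0 from c.2.2)).choose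

theorem mapUp_isLift (hP : IsCoveringMap P) (S : CWStructure E) (n : ℕ) (c : cellUp P S n) : IsLift P S n c.1 (mapUp hP S n c) :=
  (exists_lift hP S n c.1 (zero_mem_cB n) c.2.2).choose_spec.1

theorem mapUp_zero (hP : IsCoveringMap P) (S : CWStructure E) (n : ℕ) (c : cellUp P S n) : mapUp hP S n c 0 = c.2.1 :=
  (exists_lift hP S n c.1 (zero_mem_cB n) c.2.2).choose_spec.2

theorem mapUp_proj (hP : IsCoveringMap P) (S : CWStructure E) (n : ℕ) (c : cellUp P S n) {x : EuclideanSpace ℝ (Fin n)}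
    (hx : x ∈ closedBall 0 1) : P (mapUp hP S n c x) = S.map n c.1 x :=
  (mapUp_isLift hP S n c).2 x hx

/-- every point over a cell lies on a lifted cell, through the prescribed parameter -/
theorem through_point (hP : IsCoveringMap P) (S : CWStructure E) (n : ℕ) (i : S.cell n) {x : EuclideanSpace ℝ (Fin n)}
    (hx : x ∈ closedBall 0 1) {z : E'} (hz : P z = S.map n i x) :
    ∃ c : cellUp P S n, c.1 = i ∧ mapUp hP S n c x = z := by
  obtain ⟨g, hg, hgx⟩ := exists_lift hP S n i hx hz
  have h0 : P (g 0) = S.map n i 0 := hg.2 0 (zero_mem_cB n)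
  refine ⟨⟨i, ⟨g 0, h0⟩⟩, rfl, ?_⟩
  have := lift_unique hP (mapUp_isLift hP S n ⟨i, ⟨g 0, h0⟩⟩) hg (zero_mem_cB n)
    (by exact mapUp_zero hP S n ⟨i, ⟨g 0, h0⟩⟩)
  rw [this hx, hgx]

/-- two lifted cells of the same base cell sharing a value coincide -/
theorem same_lift (hP : IsCoveringMap P) (S : CWStructure E) (n : ℕ) (c c' : cellUp P S n) (hi : c.1 = c'.1)
    {x : EuclideanSpace ℝ (Fin n)} (hx : x ∈ closedBall 0 1)
    (hval : mapUp hP S n c x = mapUp hP S n c' x) : c = c' := by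
  obtain ⟨i, e⟩ := c
  obtain ⟨i', e'⟩ := c'
  cases hi
  have heq := lift_unique hP (mapUp_isLift hP S n ⟨i, e⟩) (mapUp_isLift hP S n ⟨i, e'⟩) hx hval
  have h0 := heq (zero_mem_cB n)
  replace h0 : e.1 = e'.1 :=
    (mapUp_zero hP S n ⟨i, e⟩).symm.trans (h0.trans (mapUp_zero hP S n ⟨i, e'⟩))
  have : e = e' := Subtype.ext h0
  rw [this]


theorem mapUp_isEmbedding (hP : IsCoveringMap P) (S : CWStructure E) (n : ℕ) (c : cellUp P S n) :
    IsEmbedding ((ball (0 : EuclideanSpace ℝ (Fin n)) 1).restrict (mapUp hP S n c)) := by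
  have h1 : Continuous ((ball (0 : EuclideanSpace ℝ (Fin n)) 1).restrict (mapUp hP S n c)) :=
    continuousOn_iff_continuous_restrict.1 ((mapUp_isLift hP S n c).1.mono ball_subset_closedBall)
  apply IsEmbedding.of_comp h1 hP.continuous
  have : P ∘ (ball (0 : EuclideanSpace ℝ (Fin n)) 1).restrict (mapUp hP S n c) =
      (ball (0 : EuclideanSpace ℝ (Fin n)) 1).restrict (S.map n c.1) := by
    funext b
    exact mapUp_proj hP S n c (ball_subset_closedBall b.2)
  rw [this]
  exact S.isEmbedding_restrict n c.1

theorem mapUp_pairwiseDisjoint (hP : IsCoveringMap P) (S : CWStructure E)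
    (c c' : Σ n, cellUp P S n) (hne : c ≠ c') :
    Disjoint (mapUp hP S c.1 c.2 '' ball 0 1) (mapUp hP S c'.1 c'.2 '' ball 0 1) := by
  obtain ⟨n, i, e⟩ := c
  obtain ⟨n', i', e'⟩ := c'
  rw [Set.disjoint_left]
  rintro z ⟨x, hx, rfl⟩ ⟨y, hy, hzy⟩
  dsimp only at x hx y hy hzy ⊢
  by_cases h : (⟨n, i⟩ : Σ k, S.cell k) = ⟨n', i'⟩
  · injection h with h1 h2
    subst h1
    have h2' : i = i' := eq_of_heq h2
    subst h2'
    -- same base cell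
    have hΦ : S.map n i x = S.map n i y := by
      rw [← mapUp_proj hP S n ⟨i, e⟩ (ball_subset_closedBall hx), ← hzy,
        mapUp_proj hP S n ⟨i, e'⟩ (ball_subset_closedBall hy)]
    have hxy : x = y := by
      have := (S.isEmbedding_restrict n i).injective
        (a₁ := ⟨x, hx⟩) (a₂ := ⟨y, hy⟩) (by exact hΦ)
      exact congrArg Subtype.val this
    subst hxy
    have hcc : (⟨i, e⟩ : cellUp P S n) = ⟨i, e'⟩ :=
      same_lift hP S n ⟨i, e⟩ ⟨i, e'⟩ rfl (ball_subset_closedBall hx) hzy.symm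
    exact hne (congrArg (Sigma.mk n) hcc)
  · have hd := S.pairwiseDisjoint ⟨n, i⟩ ⟨n', i'⟩ h
    rw [Set.disjoint_left] at hd
    apply hd (a := S.map n i x) ⟨x, hx, rfl⟩
    refine ⟨y, hy, ?_⟩
    show S.map n' i' y = S.map n i x
    rw [← mapUp_proj hP S n' ⟨i', e'⟩ (ball_subset_closedBall hy), hzy,
      mapUp_proj hP S n ⟨i, e⟩ (ball_subset_closedBall hx)]

theorem mapUp_iUnion (hP : IsCoveringMap P) (S : CWStructure E) :
    (⋃ (n : ℕ) (c : cellUp P S n), mapUp hP S n c '' ball 0 1) = univ := by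
  apply eq_univ_of_forall
  intro z
  have : P z ∈ (⋃ (n : ℕ) (i : S.cell n), S.map n i '' ball 0 1) := by
    rw [S.iUnion_cells]; trivial
  simp only [mem_iUnion] at this ⊢
  obtain ⟨n, i, x, hx, hΦ⟩ := this
  obtain ⟨c, _, hc⟩ := through_point hP S n i (ball_subset_closedBall hx) hΦ.symm
  exact ⟨n, c, x, hx, hc⟩

theorem mapUp_boundary (hP : IsCoveringMap P) (S : CWStructure E) (n : ℕ) (c : cellUp P S n) :
    mapUp hP S n c '' sphere 0 1 ⊆
      ⋃ (m : ℕ) (_ : m < n) (j : cellUp P S m), mapUp hP S m j '' ball 0 1 := by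
  rintro z ⟨x, hx, rfl⟩
  have hxD : x ∈ closedBall (0 : EuclideanSpace ℝ (Fin n)) 1 := sphere_subset_closedBall hx
  have : P (mapUp hP S n c x) ∈ S.map n c.1 '' sphere 0 1 :=
    ⟨x, hx, (mapUp_proj hP S n c hxD).symm⟩
  have := S.boundary_subset n c.1 this
  simp only [mem_iUnion] at this ⊢
  obtain ⟨m, hm, j, y, hy, hΦ⟩ := this
  obtain ⟨c', _, hc'⟩ := through_point hP S m j (ball_subset_closedBall hy) hΦ.symm
  exact ⟨m, hm, c', y, hy, hc'⟩


theorem mapUp_weak_topology (hP : IsCoveringMap P) (S : CWStructure E) (A : Set E') :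
    IsClosed A ↔ ∀ n (c : cellUp P S n), IsClosed (mapUp hP S n c ⁻¹' A ∩ closedBall 0 1) := by
  constructor
  · intro hA n c
    have := (mapUp_isLift hP S n c).1.preimage_isClosed_of_isClosed
      Metric.isClosed_closedBall hA
    rwa [inter_comm] at this
  · intro h
    apply isClosed_of_closure_subset
    intro w hw
    obtain ⟨U, V, σ, hU, hV, hwV, hσc, hσP, hσV, hVP, hVσ⟩ := hP.sheet_exists w
    set B₀ : Set E := {u | u ∈ U ∧ σ u ∈ A} with hB₀def
    have hBcl : IsClosed (Uᶜ ∪ B₀) := by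
      rw [S.weak_topology]
      intro n i
      apply isClosed_of_closure_subset
      intro x hxcl
      have hxD : x ∈ closedBall (0:EuclideanSpace ℝ (Fin n)) 1 := by
        have := closure_mono (inter_subset_right
          (s := S.map n i ⁻¹' (Uᶜ ∪ B₀))) hxcl
        rwa [Metric.isClosed_closedBall.closure_eq] at this
      by_contra hxC
      have hxU : S.map n i x ∈ U := by
        by_contra h'
        exact hxC ⟨Or.inl h', hxD⟩
      have hσA : σ (S.map n i x) ∉ A := by
        intro h'
        exact hxC ⟨Or.inr ⟨hxU, h'⟩, hxD⟩
      obtain ⟨⟨i', e⟩, hc1, hc2⟩ := through_point hP S n i hxD (hσP _ hxU)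
      dsimp only at hc1
      subst hc1
      set c : cellUp P S n := ⟨i', e⟩ with hcdef
      set g := mapUp hP S n c with hgdef
      have hgx : g x = σ (S.map n i' x) := hc2
      have hZ : IsClosed (g ⁻¹' A ∩ closedBall 0 1) := h n c
      have hxZ : x ∉ g ⁻¹' A ∩ closedBall 0 1 := fun hmem => hσA (by rw [← hgx]; exact hmem.1)
      have hcwa : ContinuousWithinAt g (closedBall 0 1) x := (mapUp_isLift hP S n c).1 x hxD
      have hVnhds : V ∈ 𝓝 (g x) := hV.mem_nhds (by rw [hgx]; exact hσV _ hxU)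
      have hpre : g ⁻¹' V ∈ 𝓝[closedBall 0 1] x := hcwa hVnhds
      rw [mem_nhdsWithin] at hpre
      obtain ⟨O, hO, hxO, hOsub⟩ := hpre
      rw [_root_.mem_closure_iff] at hxcl
      obtain ⟨y, ⟨hyO, hyZc⟩, hyB, hyD⟩ := hxcl (O ∩ (g ⁻¹' A ∩ closedBall 0 1)ᶜ)
        (hO.inter hZ.isOpen_compl) ⟨hxO, hxZ⟩
      have hgyV : g y ∈ V := hOsub ⟨hyO, hyD⟩
      have hPgy : P (g y) = S.map n i' y := mapUp_proj hP S n c hyD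
      have hyU : S.map n i' y ∈ U := by rw [← hPgy]; exact hVP _ hgyV
      have hyB₀ : S.map n i' y ∈ B₀ := by
        rcases hyB with h' | h'
        · exact absurd hyU h'
        · exact h'
      have : g y ∈ A := by
        have := hVσ _ hgyV
        rw [hPgy] at this
        rw [← this]
        exact hyB₀.2
      exact hyZc ⟨this, hyD⟩
    -- conclude
    have hw' : w ∈ closure (V ∩ A) := hV.inter_closure ⟨hwV, hw⟩
    have hsub : V ∩ A ⊆ P ⁻¹' (Uᶜ ∪ B₀) := by
      rintro v ⟨hvV, hvA⟩
      exact Or.inr ⟨hVP _ hvV, by rw [hVσ _ hvV]; exact hvA⟩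
    have : w ∈ P ⁻¹' (Uᶜ ∪ B₀) :=
      closure_minimal hsub (hBcl.preimage hP.continuous) hw'
    rcases this with h' | h'
    · exact absurd (hVP _ hwV) h'
    · rw [← hVσ _ hwV]
      exact h'.2


theorem mapUp_closure_finite (hP : IsCoveringMap P) (S : CWStructure E) (n : ℕ)
    (c : cellUp P S n) :
    ∃ T : Finset (Σ m, cellUp P S m),
      mapUp hP S n c '' sphere 0 1 ⊆ ⋃ d ∈ T, mapUp hP S d.1 d.2 '' ball 0 1 := by
  classical
  haveI : T2Space E := S.t2
  haveI : T2Space E' := hP.t2space_of_t2space S.t2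
  set K : Set E' := mapUp hP S n c '' sphere 0 1 with hKdef
  have hKcomp : IsCompact K :=
    (isCompact_sphere 0 1).image_of_continuousOn
      ((mapUp_isLift hP S n c).1.mono sphere_subset_closedBall)
  obtain ⟨S₀, hS₀⟩ := S.closure_finite n c.1
  -- sheets at every point
  choose U V σ hU hV hmemV hσc hσP hσV hVP hVσ using fun z : E' => hP.sheet_exists z
  -- finite subcover of K by sheets
  obtain ⟨t, ht⟩ := hKcomp.elim_finite_subcover (fun z : E' => V z) (fun z => hV z)
    (fun k _ => mem_iUnion.2 ⟨k, hmemV k⟩)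
  -- shrink, working inside the compact Hausdorff subspace K
  haveI hKcs : CompactSpace ↥K := isCompact_iff_compactSpace.1 hKcomp
  obtain ⟨v, hvcov, hvopen, hvcl⟩ :=
    exists_subset_iUnion_closure_subset (X := ↥K) (s := univ)
      (u := fun j : ↥t => Subtype.val ⁻¹' (V j.val)) isClosed_univ
      (fun j => (hV _).preimage continuous_subtype_val)
      (fun x _ => Set.toFinite _)
      (by
        intro k _
        have := ht k.2
        simp only [mem_iUnion] at this ⊢
        obtain ⟨z, hz, hzk⟩ := this
        exact ⟨⟨z, hz⟩, hzk⟩)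
  set Kj : ↥t → Set E' := fun j => Subtype.val '' closure (v j) with hKjdef
  have hKjcomp : ∀ j, IsCompact (Kj j) :=
    fun j => (isClosed_closure.isCompact).image continuous_subtype_val
  have hKjV : ∀ j, Kj j ⊆ V j.val := by
    rintro j _ ⟨y, hy, rfl⟩
    exact hvcl j hy
  have hKjcov : ∀ k ∈ K, ∃ j, k ∈ Kj j := by
    intro k hk
    have : (⟨k, hk⟩ : ↥K) ∈ ⋃ j, v j := hvcov trivial
    simp only [mem_iUnion] at this
    obtain ⟨j, hj⟩ := this
    exact ⟨j, ⟨⟨k, hk⟩, subset_closure hj, rfl⟩⟩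
  -- the family of "pieces" of a fixed downstairs cell meeting the closure of `v j` is finite
  have claimA : ∀ (m : ℕ) (i : S.cell m) (j : ↥t),
      Set.Finite {e : ↥(P ⁻¹' {S.map m i 0}) |
        ∃ x ∈ ball (0 : EuclideanSpace ℝ (Fin m)) 1,
          mapUp hP S m ⟨i, e⟩ x ∈ Kj j} := by
    intro m i j
    by_contra hinf
    obtain ⟨f⟩ : Nonempty (ℕ ↪ {e : ↥(P ⁻¹' {S.map m i 0}) |
        ∃ x ∈ ball (0 : EuclideanSpace ℝ (Fin m)) 1, mapUp hP S m ⟨i, e⟩ x ∈ Kj j}) :=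
      ⟨Set.Infinite.natEmbedding _ hinf⟩
    have hee : ∀ k, ∃ x ∈ ball (0 : EuclideanSpace ℝ (Fin m)) 1,
        mapUp hP S m ⟨i, (f k).1⟩ x ∈ Kj j := fun k => (f k).2
    choose xseq hxball hxcl using hee
    set Φ := S.map m i with hΦdef
    obtain ⟨w, hwD, φ, hφ, hconv⟩ := (isCompact_closedBall
      (0 : EuclideanSpace ℝ (Fin m)) 1).tendsto_subseq
      (fun k => ball_subset_closedBall (hxball k))
    set L : Set E := P '' Kj j with hLdef
    have hLcomp : IsCompact L := (hKjcomp j).image hP.continuous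
    have hLU : L ⊆ U j.val := by
      rintro u ⟨z, hz, rfl⟩
      exact hVP _ _ (hKjV j hz)
    have hPz : ∀ k, P (mapUp hP S m ⟨i, (f k).1⟩ (xseq k)) = Φ (xseq k) :=
      fun k => mapUp_proj hP S m ⟨i, (f k).1⟩ (ball_subset_closedBall (hxball k))
    have hΦL : ∀ k, Φ (xseq k) ∈ L := by
      intro k
      rw [← hPz k]
      exact ⟨_, hxcl k, rfl⟩
    have htendxw : Filter.Tendsto (fun k => xseq (φ k)) Filter.atTop (𝓝[closedBall 0 1] w) := by
      rw [tendsto_nhdsWithin_iff]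
      exact ⟨hconv, Filter.Eventually.of_forall fun k => ball_subset_closedBall (hxball _)⟩
    have hcw : ContinuousWithinAt Φ (closedBall 0 1) w := S.continuousOn m i w hwD
    have hΦw : Φ w ∈ L := by
      have : Filter.Tendsto (fun k => Φ (xseq (φ k))) Filter.atTop (𝓝 (Φ w)) :=
        (hcw.tendsto).comp htendxw
      exact hLcomp.isClosed.mem_of_tendsto this (Filter.Eventually.of_forall fun k => hΦL _)
    have hΦwU : Φ w ∈ U j.val := hLU hΦw
    have hpre : Φ ⁻¹' (U j.val) ∈ 𝓝[closedBall 0 1] w := hcw ((hU _).mem_nhds hΦwU)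
    rw [Metric.mem_nhdsWithin_iff] at hpre
    obtain ⟨ε, hε, hball⟩ := hpre
    have hev : ∀ᶠ k in Filter.atTop, xseq (φ k) ∈ Metric.ball w ε :=
      hconv (Metric.ball_mem_nhds w hε)
    obtain ⟨N, hN⟩ := hev.exists_forall_of_atTop
    set a := φ N with hadef
    set b := φ (N + 1) with hbdef
    have hxa : xseq a ∈ Metric.ball w ε ∩ ball 0 1 := ⟨hN N le_rfl, hxball a⟩
    have hxb : xseq b ∈ Metric.ball w ε ∩ ball 0 1 := ⟨hN (N+1) (by omega), hxball b⟩
    set Sc : Set (EuclideanSpace ℝ (Fin m)) := Metric.ball w ε ∩ ball 0 1 with hScdef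
    have hScconv : Convex ℝ Sc := (convex_ball w ε).inter (convex_ball 0 1)
    have hScsub : Sc ⊆ closedBall 0 1 := fun y hy => ball_subset_closedBall hy.2
    have hScU : ∀ y ∈ Sc, Φ y ∈ U j.val := by
      intro y hy
      exact hball ⟨hy.1, hScsub hy⟩
    set ρ : EuclideanSpace ℝ (Fin m) → E' := fun y => σ j.val (Φ y) with hρdef
    have hρcont : ContinuousOn ρ Sc := by
      apply (hσc _).comp ((S.continuousOn m i).mono hScsub) hScU
    have key : ∀ k, xseq k ∈ Sc → EqOn (mapUp hP S m ⟨i, (f k).1⟩) ρ Sc := by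
      intro k hxk
      apply hP.eqOn_of_comp_eqOn hScconv.isPreconnected
        ((mapUp_isLift hP S m ⟨i, (f k).1⟩).1.mono hScsub) hρcont ?_ hxk ?_
      · intro y hy
        show P _ = P _
        rw [mapUp_proj hP S m ⟨i, (f k).1⟩ (hScsub hy), hρdef]
        exact (hσP _ _ (hScU y hy)).symm
      · show mapUp hP S m ⟨i, (f k).1⟩ (xseq k) = σ j.val (Φ (xseq k))
        rw [← hPz k]
        exact (hVσ _ _ (hKjV j (hxcl k))).symm
    have keyab : mapUp hP S m ⟨i, (f a).1⟩ (xseq b) = mapUp hP S m ⟨i, (f b).1⟩ (xseq b) := by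
      rw [key a hxa hxb, key b hxb hxb]
    have hcc : (⟨i, (f a).1⟩ : cellUp P S m) = ⟨i, (f b).1⟩ :=
      same_lift hP S m _ _ rfl (hScsub hxb) keyab
    have heab : (f a).1 = (f b).1 :=
      eq_of_heq (Sigma.mk.inj_iff.mp hcc).2
    have hab : a = b := f.injective (Subtype.ext heab)
    have hlt : a < b := hφ (Nat.lt_succ_self N)
    omega
  -- assemble the finite set of lifted cells
  set Q : (Σ m, S.cell m) → Set (Σ m, cellUp P S m) := fun c' =>
    (fun e : ↥(P ⁻¹' {S.map c'.1 c'.2 0}) => (⟨c'.1, ⟨c'.2, e⟩⟩ : Σ m, cellUp P S m)) ''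
      {e | ∃ j : ↥t, ∃ x ∈ ball (0 : EuclideanSpace ℝ (Fin c'.1)) 1,
        mapUp hP S c'.1 ⟨c'.2, e⟩ x ∈ Kj j} with hQdef
  have hQfin : ∀ c' : Σ m, S.cell m, (Q c').Finite := by
    intro c'
    apply Set.Finite.image
    have : {e : ↥(P ⁻¹' {S.map c'.1 c'.2 0}) | ∃ j : ↥t,
        ∃ x ∈ ball (0 : EuclideanSpace ℝ (Fin c'.1)) 1,
          mapUp hP S c'.1 ⟨c'.2, e⟩ x ∈ Kj j} ⊆
        ⋃ j : ↥t, {e | ∃ x ∈ ball (0 : EuclideanSpace ℝ (Fin c'.1)) 1,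
          mapUp hP S c'.1 ⟨c'.2, e⟩ x ∈ Kj j} := by
      rintro e ⟨j, hj⟩
      exact mem_iUnion.2 ⟨j, hj⟩
    exact Set.Finite.subset (Set.finite_iUnion (fun j => claimA c'.1 c'.2 j)) this
  have hTfin : (⋃ c' ∈ S₀, Q c').Finite := S₀.finite_toSet.biUnion (fun c' _ => hQfin c')
  refine ⟨hTfin.toFinset, ?_⟩
  intro k hk
  -- k lies on some lifted cell
  have hkU : k ∈ ⋃ (m : ℕ) (d : cellUp P S m), mapUp hP S m d '' ball 0 1 := by
    rw [mapUp_iUnion hP S]; trivial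
  simp only [mem_iUnion] at hkU
  obtain ⟨m, ⟨im, em⟩, x, hxball, hxk⟩ := hkU
  -- its downstairs cell is in S₀
  have hPk : P k ∈ S.map n c.1 '' sphere 0 1 := by
    obtain ⟨y, hy, rfl⟩ := hk
    exact ⟨y, hy, (mapUp_proj hP S n c (sphere_subset_closedBall hy)).symm⟩
  have hdown := hS₀ hPk
  simp only [mem_iUnion] at hdown
  obtain ⟨c'', hc''S₀, y, hyball, hyPk⟩ := hdown
  have hPkm : P k = S.map m im x := by
    rw [← hxk]
    exact mapUp_proj hP S m ⟨im, em⟩ (ball_subset_closedBall hxball)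
  have hceq : c'' = (⟨m, im⟩ : Σ l, S.cell l) := by
    by_contra hne
    have hd := S.pairwiseDisjoint c'' ⟨m, im⟩ hne
    rw [Set.disjoint_left] at hd
    exact hd ⟨y, hyball, hyPk⟩ ⟨x, hxball, hPkm.symm⟩
  rw [hceq] at hc''S₀
  -- pick the sheet for k
  obtain ⟨j, hj⟩ := hKjcov k hk
  have hmemQ : (⟨m, ⟨im, em⟩⟩ : Σ l, cellUp P S l) ∈ Q ⟨m, im⟩ := by
    refine ⟨em, ⟨j, x, hxball, ?_⟩, rfl⟩
    rw [hxk]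
    exact hj
  rw [mem_iUnion]
  refine ⟨⟨m, ⟨im, em⟩⟩, ?_⟩
  rw [mem_iUnion]
  refine ⟨?_, ⟨x, hxball, hxk⟩⟩
  rw [Set.Finite.mem_toFinset]
  exact mem_biUnion hc''S₀ hmemQ

end LiftCW

namespace LiftCW

variable {E' E : Type u} [TopologicalSpace E'] [TopologicalSpace E] {P : E' → E}

noncomputable def liftedCW (hP : IsCoveringMap P) (S : CWStructure E) : CWStructure E' where
  cell := cellUp P S
  map := mapUp hP S
  continuousOn := fun n c => (mapUp_isLift hP S n c).1
  isEmbedding_restrict := mapUp_isEmbedding hP S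
  pairwiseDisjoint := mapUp_pairwiseDisjoint hP S
  iUnion_cells := mapUp_iUnion hP S
  boundary_subset := mapUp_boundary hP S
  closure_finite := mapUp_closure_finite hP S
  weak_topology := mapUp_weak_topology hP S
  t2 := hP.t2space_of_t2space S.t2

theorem liftedCW_skeleton (hP : IsCoveringMap P) (S : CWStructure E) (n : ℕ) :
    (liftedCW hP S).skeleton n = P ⁻¹' (S.skeleton n) := by
  ext z
  simp only [CWStructure.skeleton, mem_iUnion, mem_preimage, liftedCW]
  constructor
  · rintro ⟨m, hm, c, hz⟩
    obtain ⟨x, hx, rfl⟩ := hz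
    exact ⟨m, hm, c.1, ⟨x, hx, (mapUp_proj hP S m c hx).symm⟩⟩
  · rintro ⟨m, hm, i, hz⟩
    obtain ⟨x, hx, hPz⟩ := hz
    obtain ⟨c, _, hc⟩ := through_point hP S m i hx hPz.symm
    exact ⟨m, hm, c, ⟨x, hx, hc⟩⟩

end LiftCW

/-- **Proposition (lifting CW-structures along coverings).**
Let `P : E' → E` be a covering projection between path connected spaces.  If `E` is a
CW-complex, then `E'` carries a CW-structure whose `n`-skeleton is the preimage under `P`
of the `n`-skeleton of `E`, and the restriction of `P` to each skeleton is again a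
covering projection. -/
theorem coveringMap_lifts_cwStructure
    {E' E : Type u} [TopologicalSpace E'] [TopologicalSpace E]
    [PathConnectedSpace E'] [PathConnectedSpace E]
    (P : E' → E) (hP : IsCoveringMap P) (S : CWStructure E) :
    ∃ S' : CWStructure E', ∀ n : ℕ,
      S'.skeleton n = P ⁻¹' (S.skeleton n) ∧
      ∃ h : Set.MapsTo P (S'.skeleton n) (S.skeleton n),
        IsCoveringMap (h.restrict P (S'.skeleton n) (S.skeleton n)) := by
  refine ⟨LiftCW.liftedCW hP S, fun n => ⟨LiftCW.liftedCW_skeleton hP S n, ?_⟩⟩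
  rw [LiftCW.liftedCW_skeleton hP S n]
  exact ⟨fun x hx => hx, hP.restrict_preimage (S.skeleton n) (fun x hx => hx)⟩
end

section
/- Let P : E' → E be a covering projection between path connected topological spaces. If E is a regular T₁ space with finite small inductive dimension ind(E) ≤ n, then E' is a regular T₁ space with small inductive dimension ind(E') ≤ n. -/
universe u

/-- `IndLE (n + 1) X inst` says that the small inductive dimension of `X` is at most `n`;
`IndLE 0 X inst` says that the small inductive dimension of `X` is `-1`, i.e. `X = ∅`:
every point has arbitrarily small open neighbourhoods whose topological boundary has
small inductive dimension at most `n - 1`. -/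
def IndLE : ℕ → ∀ (X : Type u), TopologicalSpace X → Prop
  | 0, X, _ => IsEmpty X
  | n + 1, X, inst =>
      letI := inst
      ∀ (x : X) (U : Set X), IsOpen U → x ∈ U →
        ∃ V : Set X, IsOpen V ∧ x ∈ V ∧ V ⊆ U ∧ IndLE n ↥(frontier V) inferInstance

open Topology Set

/-- Small inductive dimension is monotone along embeddings. -/
lemma indLE_of_isEmbedding : ∀ (n : ℕ) {X Y : Type u} [tX : TopologicalSpace X]
    [tY : TopologicalSpace Y] (f : X → Y), Topology.IsEmbedding f →
    IndLE n Y tY → IndLE n X tX := by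
  intro n
  induction n with
  | zero =>
    intro X Y tX tY f hf h
    exact ⟨fun x => h.elim (f x)⟩
  | succ n ih =>
    intro X Y tX tY f hf h x U hU hxU
    obtain ⟨U', hU'o, hUeq⟩ := hf.isInducing.isOpen_iff.mp hU
    obtain ⟨V', hV'o, hxV', hV'U, hind⟩ := h (f x) U' hU'o (by
      rw [← hUeq] at hxU; exact hxU)
    have hfr : frontier (f ⁻¹' V') ⊆ f ⁻¹' (frontier V') := by
      intro y hy
      rw [(hV'o.preimage hf.continuous).frontier_eq] at hy
      have h3 : f y ∈ closure V' := hf.continuous.closure_preimage_subset V' hy.1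
      rw [hV'o.frontier_eq]
      exact ⟨h3, hy.2⟩
    refine ⟨f ⁻¹' V', hV'o.preimage hf.continuous, hxV', by
      rw [← hUeq]; exact Set.preimage_mono hV'U, ?_⟩
    have hgemb : Topology.IsEmbedding
        (Set.codRestrict (f ∘ (Subtype.val : ↥(frontier (f ⁻¹' V')) → X)) (frontier V')
          (fun y => hfr y.2)) :=
      (hf.comp Topology.IsEmbedding.subtypeVal).codRestrict _ _
    exact ih _ hgemb hind

section Sheet

variable {E' E F : Type u} [TopologicalSpace E'] [TopologicalSpace E] [TopologicalSpace F]
  [DiscreteTopology F] {P : E' → E} (t : Bundle.Trivialization F P) (x : E')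

/-- The sheet of the trivialization `t` through the point `x`. -/
def mySheet : Set E' := {y | y ∈ t.source ∧ (t y).2 = (t x).2}

lemma mySheet_isOpen : IsOpen (mySheet t x) := by
  have h : mySheet t x = t.source ∩ ↑t ⁻¹' (Set.univ ×ˢ {(t x).2}) := by
    ext y
    simp only [mySheet, Set.mem_setOf_eq, Set.mem_inter_iff, Set.mem_preimage, Set.mem_prod,
      Set.mem_univ, true_and, Set.mem_singleton_iff]
  rw [h]
  exact t.continuousOn_toFun.isOpen_inter_preimage t.open_source
    (isOpen_univ.prod (isOpen_discrete _))

lemma mem_mySheet (hx : P x ∈ t.baseSet) : x ∈ mySheet t x :=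
  ⟨t.mem_source.mpr hx, rfl⟩

lemma mySheet_injOn : Set.InjOn P (mySheet t x) := by
  intro a ha b hb hab
  have h1 : t a = t b := by
    have h2 : (t a).1 = (t b).1 := by rw [t.coe_fst ha.1, t.coe_fst hb.1, hab]
    have h3 : (t a).2 = (t b).2 := by rw [ha.2, hb.2]
    exact Prod.ext h2 h3
  exact t.toPartialHomeomorph.injOn ha.1 hb.1 h1

lemma mySheet_inter_closed (hPc : Continuous P) {C : Set E} (hCb : C ⊆ t.baseSet)
    (hC : IsClosed C) : IsClosed (mySheet t x ∩ P ⁻¹' C) := by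
  rw [← isOpen_compl_iff]
  have h : (mySheet t x ∩ P ⁻¹' C)ᶜ =
      P ⁻¹' Cᶜ ∪ (t.source ∩ ↑t ⁻¹' (Set.univ ×ˢ {(t x).2}ᶜ)) := by
    ext y
    constructor
    · intro hy
      by_cases hyC : P y ∈ C
      · right
        have hys : y ∈ t.source := t.mem_source.mpr (hCb hyC)
        have hne : ¬ (t y).2 = (t x).2 := fun hmem => hy ⟨⟨hys, hmem⟩, hyC⟩
        exact ⟨hys, by simpa using hne⟩
      · exact Or.inl hyC
    · rintro (hy | hy) ⟨hsh, hyC⟩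
      · exact hy hyC
      · exact (by simpa using hy.2 : ¬ (t y).2 = (t x).2) hsh.2
  rw [h]
  exact (hC.isOpen_compl.preimage hPc).union
    (t.continuousOn_toFun.isOpen_inter_preimage t.open_source
      (isOpen_univ.prod (isOpen_discrete _)))

end Sheet

/-- **Proposition 5(c).**
Let `P : E' → E` be a covering projection between path connected spaces.  If `E` is a
regular `T₁` space with small inductive dimension `ind(E) ≤ n`, then `E'` is a regular `T₁`
space with `ind(E') ≤ n`. -/
theorem coveringMap_lifts_regular_and_ind
    {E' E : Type u} [tE' : TopologicalSpace E'] [tE : TopologicalSpace E]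
    [PathConnectedSpace E'] [PathConnectedSpace E]
    (P : E' → E) (hP : IsCoveringMap P)
    [RegularSpace E] [T1Space E] (n : ℕ) (hE : IndLE (n + 1) E tE) :
    RegularSpace E' ∧ T1Space E' ∧ IndLE (n + 1) E' tE' := by
  have hPc : Continuous P := hP.continuous
  -- T1
  have hT1 : T1Space E' := by
    constructor
    intro x
    obtain ⟨hdisc, t, hxt⟩ : DiscreteTopology (P ⁻¹' {P x}) ∧
      ∃ t : Bundle.Trivialization (P ⁻¹' {P x}) P, P x ∈ t.baseSet := by
      haveI : Nonempty (P ⁻¹' {P x}) := ⟨⟨x, rfl⟩⟩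
      exact ⟨(hP (P x)).1, _, (hP (P x)).mem_toTrivialization_baseSet⟩
    haveI := hdisc
    have hxs : x ∈ mySheet t x := mem_mySheet t x hxt
    have hkey : ({x} : Set E') = mySheet t x ∩ P ⁻¹' {P x} := by
      apply Set.Subset.antisymm
      · rintro y rfl; exact ⟨hxs, rfl⟩
      · rintro y ⟨hy1, hy2⟩
        exact mySheet_injOn t x hy1 hxs hy2
    rw [hkey]
    exact mySheet_inter_closed t x hPc (Set.singleton_subset_iff.mpr hxt) isClosed_singleton
  -- Regularity
  have hReg : RegularSpace E' := by
    apply RegularSpace.of_exists_mem_nhds_isClosed_subset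
    intro x s hs
    obtain ⟨U, hUs, hUo, hxU⟩ := mem_nhds_iff.mp hs
    obtain ⟨hdisc, t, hxt⟩ : DiscreteTopology (P ⁻¹' {P x}) ∧
      ∃ t : Bundle.Trivialization (P ⁻¹' {P x}) P, P x ∈ t.baseSet := by
      haveI : Nonempty (P ⁻¹' {P x}) := ⟨⟨x, rfl⟩⟩
      exact ⟨(hP (P x)).1, _, (hP (P x)).mem_toTrivialization_baseSet⟩
    haveI := hdisc
    have hxs : x ∈ mySheet t x := mem_mySheet t x hxt
    set U' := U ∩ mySheet t x with hU'def
    have hU'o : IsOpen U' := hUo.inter (mySheet_isOpen t x)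
    have hxU' : x ∈ U' := ⟨hxU, hxs⟩
    have hWo : IsOpen (P '' U') := hP.isOpenMap U' hU'o
    have hWb : P '' U' ⊆ t.baseSet := by
      rintro w ⟨y, hy, rfl⟩
      exact t.mem_source.mp hy.2.1
    obtain ⟨D, hDnhds, hDc, hDW⟩ :=
      exists_mem_nhds_isClosed_subset (hWo.mem_nhds ⟨x, hxU', rfl⟩)
    refine ⟨mySheet t x ∩ P ⁻¹' D, ?_, ?_, ?_⟩
    · have : mySheet t x ∩ P ⁻¹' (interior D) ⊆ mySheet t x ∩ P ⁻¹' D :=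
        Set.inter_subset_inter_right _ (Set.preimage_mono interior_subset)
      exact Filter.mem_of_superset
        (((mySheet_isOpen t x).inter (isOpen_interior.preimage hPc)).mem_nhds
          ⟨hxs, mem_interior_iff_mem_nhds.mpr hDnhds⟩) this
    · exact mySheet_inter_closed t x hPc (hDW.trans hWb) hDc
    · rintro y ⟨hy1, hy2⟩
      obtain ⟨z, hz, hzy⟩ := hDW hy2
      have : y = z := mySheet_injOn t x hy1 hz.2 hzy.symm
      exact hUs (this ▸ hz.1)
  refine ⟨hReg, hT1, ?_⟩
  -- inductive dimension
  intro x U hU hxU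
  obtain ⟨e, hxe, hPe⟩ := hP.isLocalHomeomorph x
  obtain ⟨hdisc, t, hxt⟩ : DiscreteTopology (P ⁻¹' {P x}) ∧
      ∃ t : Bundle.Trivialization (P ⁻¹' {P x}) P, P x ∈ t.baseSet := by
      haveI : Nonempty (P ⁻¹' {P x}) := ⟨⟨x, rfl⟩⟩
      exact ⟨(hP (P x)).1, _, (hP (P x)).mem_toTrivialization_baseSet⟩
  haveI := hdisc
  have hxs : x ∈ mySheet t x := mem_mySheet t x hxt
  set U' := U ∩ e.source ∩ mySheet t x with hU'def
  have hU'o : IsOpen U' := (hU.inter e.open_source).inter (mySheet_isOpen t x)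
  have hxU' : x ∈ U' := ⟨⟨hxU, hxe⟩, hxs⟩
  set W := P '' U' with hWdef
  have hWo : IsOpen W := hP.isOpenMap U' hU'o
  have hxW : P x ∈ W := ⟨x, hxU', rfl⟩
  have hWb : W ⊆ t.baseSet := by
    rintro w ⟨y, hy, rfl⟩
    exact t.mem_source.mp hy.2.1
  -- injectivity consequence
  have hback : mySheet t x ∩ P ⁻¹' W ⊆ U' := by
    rintro y ⟨hy1, hy2⟩
    obtain ⟨z, hz, hzy⟩ := hy2
    have : z = y := mySheet_injOn t x hz.2 hy1 hzy
    exact this ▸ hz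
  -- shrink using regularity of E
  obtain ⟨D, hDnhds, hDc, hDW⟩ := exists_mem_nhds_isClosed_subset (hWo.mem_nhds hxW)
  obtain ⟨W', hW'o, hxW', hW'D, hindW'⟩ := hE (P x) (interior D) isOpen_interior
    (mem_interior_iff_mem_nhds.mpr hDnhds)
  have hclW' : closure W' ⊆ W := by
    intro w hw
    exact hDW (hDc.closure_subset_iff.mpr (hW'D.trans interior_subset) hw)
  set V := mySheet t x ∩ P ⁻¹' W' with hVdef
  have hVo : IsOpen V := (mySheet_isOpen t x).inter (hW'o.preimage hPc)
  have hxV : x ∈ V := ⟨hxs, hxW'⟩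
  have hVW : V ⊆ mySheet t x ∩ P ⁻¹' W :=
    Set.inter_subset_inter_right _ (Set.preimage_mono (subset_closure.trans hclW'))
  have hVU : V ⊆ U := fun y hy => (hback (hVW hy)).1.1
  have hclosedC : IsClosed (mySheet t x ∩ P ⁻¹' closure W') :=
    mySheet_inter_closed t x hPc (hclW'.trans hWb) isClosed_closure
  have hclV : closure V ⊆ mySheet t x ∩ P ⁻¹' closure W' :=
    closure_minimal (Set.inter_subset_inter_right _ (Set.preimage_mono subset_closure)) hclosedC
  have hfr : frontier V ⊆ mySheet t x ∩ P ⁻¹' (frontier W') := by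
    intro y hy
    rw [hVo.frontier_eq] at hy
    have h1 := hclV hy.1
    refine ⟨h1.1, ?_⟩
    rw [hW'o.frontier_eq]
    exact ⟨h1.2, fun hw => hy.2 ⟨h1.1, hw⟩⟩
  have hfre : frontier V ⊆ e.source := by
    intro y hy
    have h1 := hfr hy
    have h2 : P y ∈ W := hclW' (frontier_subset_closure h1.2)
    exact (hback ⟨h1.1, h2⟩).1.2
  refine ⟨V, hVo, hxV, hVU, ?_⟩
  have hg : Topology.IsEmbedding (Set.codRestrict
      (P ∘ (Subtype.val : ↥(frontier V) → E')) (frontier W') (fun y => (hfr y.2).2)) := by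
    apply Topology.IsEmbedding.codRestrict
    have heq : (P ∘ (Subtype.val : ↥(frontier V) → E')) =
        (Subtype.val ∘ (e.toHomeomorphSourceTarget : e.source → e.target) ∘
          Set.inclusion hfre) := by
      funext y
      simp only [Function.comp_apply, OpenPartialHomeomorph.toHomeomorphSourceTarget_apply_coe,
        Set.coe_inclusion, hPe]
    rw [heq]
    exact Topology.IsEmbedding.subtypeVal.comp
      (e.toHomeomorphSourceTarget.isEmbedding.comp (Topology.IsEmbedding.inclusion hfre))
  exact indLE_of_isEmbedding n _ hg hindW'
end

section
/- Let P : E' → E be a covering projection between path connected topological spaces. If E is locally path connected and second countable, then E' is locally path connected and second countable. -/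
universe u

open Set Topology TopologicalSpace

/-- The domain of a local homeomorphism into a locally path connected space is
locally path connected. -/
theorem IsLocalHomeomorph.locPathConnectedSpace' {X Y : Type*} [TopologicalSpace X]
    [TopologicalSpace Y] [LocallyPathConnectedSpace Y] {f : X → Y} (hf : IsLocalHomeomorph f) :
    LocallyPathConnectedSpace X := by
  rw [locallyPathConnectedSpace_iff_pathComponentIn_mem_nhds]
  intro x u hu hxu
  obtain ⟨e, hxe, rfl⟩ := hf x
  -- work inside `e.source`
  set s : Set Y := e '' (u ∩ e.source) with hs
  have hso : IsOpen s := e.isOpen_image_of_subset_source (hu.inter e.open_source)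
    inter_subset_right
  have hexs : e x ∈ s := mem_image_of_mem _ ⟨hxu, hxe⟩
  set w : Set Y := pathComponentIn s (e x) with hw
  have hwo : IsOpen w := hso.pathComponentIn _
  have hwpc : IsPathConnected w := isPathConnected_pathComponentIn hexs
  have hws : w ⊆ s := pathComponentIn_subset
  have hwt : w ⊆ e.target := hws.trans (by
    rintro _ ⟨z, hz, rfl⟩; exact e.map_source hz.2)
  -- pull back
  have hsymm : e.symm '' w = e.source ∩ e ⁻¹' w :=
    e.symm_image_eq_source_inter_preimage hwt
  have hpc : IsPathConnected (e.symm '' w) :=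
    hwpc.image' (e.continuousOn_symm.mono hwt)
  have hxmem : x ∈ e.symm '' w := by
    refine ⟨e x, mem_pathComponentIn_self hexs, e.left_inv hxe⟩
  have hsub : e.symm '' w ⊆ u := by
    rintro _ ⟨y, hyw, rfl⟩
    obtain ⟨z', hz', rfl⟩ := hws hyw
    rw [e.left_inv hz'.2]
    exact hz'.1
  have hopen : IsOpen (e.symm '' w) := by
    rw [hsymm]; exact e.isOpen_inter_preimage hwo
  exact Filter.mem_of_superset (hopen.mem_nhds hxmem)
    (hpc.subset_pathComponentIn hxmem hsub)

/-- A covering map is injective on preconnected subsets of the preimage of the base set of a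
trivialization. -/
theorem Bundle.Trivialization.injOn_of_isPreconnected {E' E F : Type*} [TopologicalSpace E']
    [TopologicalSpace E] [TopologicalSpace F] [DiscreteTopology F] {P : E' → E}
    (t : Bundle.Trivialization F P) {S : Set E'} (hS : IsPreconnected S)
    (hSb : S ⊆ P ⁻¹' t.baseSet) : Set.InjOn P S := by
  have hSsrc : S ⊆ t.source := fun z hz => t.mem_source.2 (hSb hz)
  have hg : ContinuousOn (Prod.snd ∘ (t : E' → E × F)) S :=
    continuous_snd.comp_continuousOn (t.toOpenPartialHomeomorph.continuousOn.mono hSsrc)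
  intro z₁ h₁ z₂ h₂ hPz
  have hc : (t z₁).2 = (t z₂).2 := hS.constant hg h₁ h₂
  have h1 : (t z₁).1 = (t z₂).1 := by
    rw [t.coe_fst (hSsrc h₁), t.coe_fst (hSsrc h₂), hPz]
  exact t.toOpenPartialHomeomorph.injOn (hSsrc h₁) (hSsrc h₂) (Prod.ext h1 hc)

/-- **Proposition 5(d).**
Let `P : E' → E` be a covering projection between path connected spaces.  If `E` is locally
path connected and second countable, then `E'` is locally path connected and second
countable. -/
theorem coveringMap_lifts_locPathConnected_and_secondCountable
    {E' E : Type u} [TopologicalSpace E'] [TopologicalSpace E]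
    [PathConnectedSpace E'] [PathConnectedSpace E]
    (P : E' → E) (hP : IsCoveringMap P)
    [LocallyPathConnectedSpace E] [SecondCountableTopology E] :
    LocallyPathConnectedSpace E' ∧ SecondCountableTopology E' := by
  have hcont : Continuous P := hP.continuous
  haveI hLPC : LocallyPathConnectedSpace E' := hP.isLocalHomeomorph.locPathConnectedSpace'
  refine ⟨hLPC, ?_⟩
  haveI hsurj : ∀ x : E, Nonempty (P ⁻¹' {x}) := by
    have hcl : IsClosed (range P) := by
      rw [← isOpen_compl_iff, isOpen_iff_mem_nhds]
      intro x hx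
      obtain ⟨_, U, hxU, hUo, _, H, _⟩ := hP x
      refine Filter.mem_of_superset (hUo.mem_nhds hxU) ?_
      rintro y hyU ⟨z, rfl⟩
      haveI : IsEmpty (P ⁻¹' {x}) := ⟨fun w => hx ⟨w.1, w.2⟩⟩
      exact isEmptyElim (H ⟨z, hyU⟩).2
    haveI : ConnectedSpace E := PathConnectedSpace.connectedSpace
    have hrange : range P = univ :=
      IsClopen.eq_univ ⟨hcl, hP.isOpenMap.isOpen_range⟩ (range_nonempty P)
    intro x
    have hx : x ∈ range P := hrange ▸ mem_univ x
    obtain ⟨z, hz⟩ := hx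
    exact ⟨⟨z, hz⟩⟩
  -- The basic path connected evenly covered neighborhoods
  set t : ∀ x : E, Bundle.Trivialization (P ⁻¹' {x}) P := fun x => (hP x).toTrivialization with ht
  have hdisc : ∀ x : E, DiscreteTopology (P ⁻¹' {x}) := fun x => (hP x).1
  set U : E → Set E := fun x => pathComponentIn (t x).baseSet x with hU
  have hUb : ∀ x, U x ⊆ (t x).baseSet := fun x => pathComponentIn_subset
  have hUo : ∀ x, IsOpen (U x) := fun x => (t x).open_baseSet.pathComponentIn _
  have hUx : ∀ x, x ∈ U x := fun x =>
    mem_pathComponentIn_self (hP x).mem_toTrivialization_baseSet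
  -- sheets
  set V : E' → E → Set E' := fun a x => pathComponentIn (P ⁻¹' U x) a with hV
  have hVo : ∀ a x, IsOpen (V a x) := fun a x =>
    ((hUo x).preimage hcont).pathComponentIn _
  have hVsub : ∀ a x, V a x ⊆ P ⁻¹' U x := fun a x => pathComponentIn_subset
  -- each sheet is second countable
  have hVsc : ∀ a x, P a ∈ U x → SecondCountableTopology (V a x) := by
    intro a x hax
    have hpc : IsPathConnected (V a x) := isPathConnected_pathComponentIn hax
    have hinj : Set.InjOn P (V a x) := by
      haveI := hdisc x
      refine (t x).injOn_of_isPreconnected hpc.isConnected.isPreconnected ?_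
      exact (hVsub a x).trans (preimage_mono (hUb x))
    have hoe : IsOpenEmbedding (fun z : V a x => P z) := by
      refine .of_continuous_injective_isOpenMap
        (hcont.comp continuous_subtype_val) ?_ ?_
      · intro z₁ z₂ h
        exact Subtype.ext (hinj z₁.2 z₂.2 h)
      · exact hP.isOpenMap.comp (hVo a x).isOpenMap_subtype_val
    exact hoe.isEmbedding.secondCountableTopology
  -- countable cover of the base
  obtain ⟨T, hTc, hTcov⟩ := countable_cover_nhds (f := U)
    (fun x => (hUo x).mem_nhds (hUx x))
  -- countable dense subsets of sheets
  have hD : ∀ (a : E') (x : E), ∃ D : Set E', D.Countable ∧ V a x ⊆ closure D := by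
    intro a x
    by_cases hax : P a ∈ U x
    · haveI := hVsc a x hax
      obtain ⟨c, hc, hcl⟩ := IsSeparable.of_subtype (V a x)
      exact ⟨c, hc, hcl⟩
    · refine ⟨∅, countable_empty, ?_⟩
      intro z hz
      exact absurd hz.source_mem hax
  choose D hDc hDcl using hD
  -- the inductively constructed countable dense set
  obtain ⟨y₀⟩ : Nonempty E' := inferInstance
  set A : ℕ → Set E' := fun n =>
    Nat.rec ({y₀} : Set E') (fun _ An => An ∪ ⋃ a ∈ An, ⋃ x ∈ T, D a x) n with hA
  have hAc : ∀ n, (A n).Countable := by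
    intro n
    induction n with
    | zero => exact countable_singleton y₀
    | succ n ih =>
      exact ih.union (ih.biUnion fun a _ => hTc.biUnion fun x _ => hDc a x)
  have hAmono : ∀ n, A n ⊆ A (n + 1) := fun n => subset_union_left
  set Atot : Set E' := ⋃ n, A n with hAtot
  have hAtotC : Atot.Countable := countable_iUnion hAc
  -- closure of Atot is clopen hence everything
  have hclopen : IsOpen (closure Atot) := by
    rw [isOpen_iff_mem_nhds]
    intro z hz
    obtain ⟨x, hxT, hzU⟩ : ∃ x ∈ T, z ∈ P ⁻¹' U x := by
      have : P z ∈ ⋃ x ∈ T, U x := by rw [hTcov]; trivial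
      simpa using this
    have hzV : z ∈ V z x := mem_pathComponentIn_self hzU
    obtain ⟨a, haV, haA⟩ : (V z x ∩ Atot).Nonempty :=
      mem_closure_iff.mp hz _ (hVo z x) hzV
    obtain ⟨n, han⟩ : ∃ n, a ∈ A n := mem_iUnion.mp haA
    have hVeq : V a x = V z x := pathComponentIn_congr haV
    have hDsub : D a x ⊆ Atot := by
      intro d hd
      refine mem_iUnion.mpr ⟨n + 1, ?_⟩
      exact Or.inr (mem_biUnion han (mem_biUnion hxT hd))
    have : V z x ⊆ closure Atot := by
      rw [← hVeq]
      exact (hDcl a x).trans (closure_mono hDsub)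
    exact Filter.mem_of_superset ((hVo z x).mem_nhds hzV) this
  have hdense : closure Atot = univ := by
    haveI : ConnectedSpace E' := PathConnectedSpace.connectedSpace
    refine IsClopen.eq_univ ⟨isClosed_closure, hclopen⟩ ?_
    exact ⟨y₀, subset_closure (mem_iUnion.mpr ⟨0, rfl⟩)⟩
  -- final countable cover of E' by second countable open sheets
  set S : Set (E' × E) := {p | p.1 ∈ Atot ∧ p.2 ∈ T ∧ P p.1 ∈ U p.2} with hS
  have hSc : S.Countable := by
    refine ((hAtotC.prod hTc).mono ?_)
    rintro ⟨a, x⟩ ⟨h1, h2, _⟩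
    exact ⟨h1, h2⟩
  haveI : Countable S := hSc.to_subtype
  haveI : ∀ p : S, SecondCountableTopology (V p.1.1 p.1.2) := fun p =>
    hVsc p.1.1 p.1.2 p.2.2.2
  refine secondCountableTopology_of_countable_cover (U := fun p : S => V p.1.1 p.1.2)
    (fun p => hVo _ _) ?_
  rw [eq_univ_iff_forall]
  intro z
  obtain ⟨x, hxT, hzU⟩ : ∃ x ∈ T, z ∈ P ⁻¹' U x := by
    have : P z ∈ ⋃ x ∈ T, U x := by rw [hTcov]; trivial
    simpa using this
  have hzV : z ∈ V z x := mem_pathComponentIn_self hzU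
  obtain ⟨a, haV, haA⟩ : (V z x ∩ Atot).Nonempty := by
    have hzc : z ∈ closure Atot := by rw [hdense]; trivial
    exact mem_closure_iff.mp hzc _ (hVo z x) hzV
  have haPU : P a ∈ U x := hVsub z x haV
  refine mem_iUnion.mpr ⟨⟨(a, x), haA, hxT, haPU⟩, ?_⟩
  rw [show V a x = V z x from pathComponentIn_congr haV]
  exact hzV
end

section
/- Let P : E' → E be a covering projection between path connected topological spaces. If E is locally path connected, separable, and metrizable, then E' is locally path connected, separable, and metrizable. -/
universe u

open Set Topology TopologicalSpace

section Sheets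

variable {E' E : Type u} [TopologicalSpace E'] [TopologicalSpace E] {P : E' → E}
  {F : Type u} [TopologicalSpace F]

/-- The sheet of a trivialization corresponding to a fiber element `i`. -/
def covSheet (t : Bundle.Trivialization F P) (i : F) : Set E' :=
  t.source ∩ ⇑t ⁻¹' (Set.univ ×ˢ {i})

lemma mem_covSheet_iff {t : Bundle.Trivialization F P} {i : F} {y : E'} :
    y ∈ covSheet t i ↔ y ∈ t.source ∧ (t y).2 = i := by
  simp only [covSheet, Set.mem_inter_iff, Set.mem_preimage, Set.mem_prod, Set.mem_univ,
    true_and, Set.mem_singleton_iff]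

lemma covSheet_isOpen [DiscreteTopology F] (t : Bundle.Trivialization F P) (i : F) :
    IsOpen (covSheet t i) := by
  unfold covSheet
  exact t.toOpenPartialHomeomorph.continuousOn.isOpen_inter_preimage t.open_source
      ((isOpen_univ (X := E)).prod (isOpen_discrete ({i} : Set F)))


lemma mem_covSheet_self {t : Bundle.Trivialization F P} {y : E'} (hy : y ∈ t.source) :
    y ∈ covSheet t (t y).2 :=
  mem_covSheet_iff.2 ⟨hy, rfl⟩

lemma covSheet_eq_of_mem {t : Bundle.Trivialization F P} {i j : F} {y : E'}
    (hi : y ∈ covSheet t i) (hj : y ∈ covSheet t j) : i = j :=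
  (mem_covSheet_iff.1 hi).2.symm.trans (mem_covSheet_iff.1 hj).2

lemma covSheet_apply {t : Bundle.Trivialization F P} {i : F} {y : E'} (hy : y ∈ covSheet t i) :
    t y = (P y, i) := by
  obtain ⟨hy₁, hy₂⟩ := mem_covSheet_iff.1 hy
  exact Prod.ext (t.coe_fst hy₁) hy₂

lemma covSheet_injOn (t : Bundle.Trivialization F P) (i : F) : Set.InjOn P (covSheet t i) := by
  intro y hy z hz hyz
  have : t y = t z := by rw [covSheet_apply hy, covSheet_apply hz, hyz]
  exact t.toOpenPartialHomeomorph.injOn (mem_covSheet_iff.1 hy).1 (mem_covSheet_iff.1 hz).1 this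

lemma covSheet_restrict_isOpenEmbedding [DiscreteTopology F]
    (hc : Continuous P) (ho : IsOpenMap P) (t : Bundle.Trivialization F P) (i : F) :
    IsOpenEmbedding ((covSheet t i).restrict P) := by
  refine IsOpenEmbedding.of_continuous_injective_isOpenMap
    (hc.comp continuous_subtype_val) ?_ (ho.restrict (covSheet_isOpen t i))
  exact Set.injOn_iff_injective.1 (covSheet_injOn t i)

lemma covSheet_secondCountable [DiscreteTopology F] [SecondCountableTopology E]
    (hc : Continuous P) (ho : IsOpenMap P) (t : Bundle.Trivialization F P) (i : F) :
    SecondCountableTopology (covSheet t i) :=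
  (covSheet_restrict_isOpenEmbedding hc ho t i).isEmbedding.secondCountableTopology

end Sheets

section CoveringAux

variable {E' E : Type u} [TopologicalSpace E'] [TopologicalSpace E] {P : E' → E}

/-- A covering map lifts local path-connectedness. -/
lemma aux_locPathConnected (hP : IsCoveringMap P) [LocallyPathConnectedSpace E] :
    LocallyPathConnectedSpace E' := by
  constructor
  intro x
  rw [Filter.hasBasis_self]
  intro n hn
  obtain ⟨e, hxe, hPe⟩ := hP.isLocalHomeomorph x
  have hUo : IsOpen (e.source ∩ interior n) := e.open_source.inter isOpen_interior
  have hxU : x ∈ e.source ∩ interior n := ⟨hxe, mem_interior_iff_mem_nhds.2 hn⟩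
  have hWo : IsOpen (e '' (e.source ∩ interior n)) :=
    e.isOpen_image_of_subset_source hUo inter_subset_left
  obtain ⟨V, ⟨hVo, hxV, hVpc⟩, hVW⟩ :=
    (isOpen_isPathConnected_basis (e x)).mem_iff.1 (hWo.mem_nhds ⟨x, hxU, rfl⟩)
  have hVt : V ⊆ e.target := fun v hv => by
    obtain ⟨u, hu, rfl⟩ := hVW hv; exact e.map_source hu.1
  have hVt' : V ⊆ e.symm.source := e.symm_source ▸ hVt
  refine ⟨e.symm '' V, ?_, ?_, ?_⟩
  · exact (e.symm.isOpen_image_of_subset_source hVo hVt').mem_nhds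
      ⟨e x, hxV, e.left_inv hxe⟩
  · exact hVpc.image' (e.symm.continuousOn.mono hVt')
  · rintro _ ⟨v, hv, rfl⟩
    obtain ⟨u, hu, rfl⟩ := hVW hv
    rw [e.left_inv hu.1]
    exact interior_subset hu.2

/-- A covering map lifts regularity. -/
lemma aux_regular (hP : IsCoveringMap P) [RegularSpace E] : RegularSpace E' := by
  refine RegularSpace.of_exists_mem_nhds_isClosed_subset fun x n hn => ?_
  haveI := (hP (P x)).1
  haveI : Nonempty ↥(P ⁻¹' {P x}) := ⟨⟨x, rfl⟩⟩
  set t := (hP (P x)).toTrivialization with ht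
  have hxt : x ∈ t.source := t.mem_source.2 (hP (P x)).mem_toTrivialization_baseSet
  set S := covSheet t (t x).2 with hS
  have hSx : x ∈ S := mem_covSheet_self hxt
  have hSo : IsOpen S := covSheet_isOpen t _
  have hU : IsOpen (P '' (S ∩ interior n)) := hP.isOpenMap _ (hSo.inter isOpen_interior)
  have hPxU : P x ∈ P '' (S ∩ interior n) :=
    ⟨x, ⟨hSx, mem_interior_iff_mem_nhds.2 hn⟩, rfl⟩
  obtain ⟨C, hC, hCc, hCU⟩ := exists_mem_nhds_isClosed_subset (hU.mem_nhds hPxU)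
  refine ⟨S ∩ P ⁻¹' C,
    Filter.inter_mem (hSo.mem_nhds hSx)
      (hP.continuous.continuousAt.preimage_mem_nhds hC), ?_, ?_⟩
  · -- closedness
    refine isClosed_of_closure_subset fun y hy => ?_
    have hyC : P y ∈ C :=
      closure_minimal inter_subset_right (hCc.preimage hP.continuous) hy
    have hyB : P y ∈ t.baseSet := by
      obtain ⟨z, hz, hPz⟩ := hCU hyC
      rw [← hPz]
      exact t.mem_source.1 ((mem_covSheet_iff.1 hz.1).1)
    have hyt : y ∈ t.source := t.mem_source.2 hyB
    have hS'o : IsOpen (covSheet t (t y).2) := covSheet_isOpen t _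
    obtain ⟨z, hz1, hz2, _⟩ := mem_closure_iff.1 hy _ hS'o (mem_covSheet_self hyt)
    have : (t y).2 = (t x).2 := covSheet_eq_of_mem hz1 hz2
    exact ⟨mem_covSheet_iff.2 ⟨hyt, this⟩, hyC⟩
  · -- subset n
    rintro y ⟨hyS, hyC⟩
    obtain ⟨z, hz, hPz⟩ := hCU hyC
    have : z = y := covSheet_injOn t _ hz.1 hyS hPz
    exact interior_subset (this ▸ hz.2)

/-- A covering map lifts the T0 property. -/
lemma aux_t0 (hP : IsCoveringMap P) [T0Space E] : T0Space E' := by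
  refine (t0Space_iff_inseparable E').2 fun x y h => ?_
  have hPxy : P x = P y := (h.map hP.continuous).eq
  haveI := (hP (P x)).1
  haveI : Nonempty ↥(P ⁻¹' {P x}) := ⟨⟨x, rfl⟩⟩
  set t := (hP (P x)).toTrivialization with ht
  have hxt : x ∈ t.source := t.mem_source.2 (hP (P x)).mem_toTrivialization_baseSet
  have hyS : y ∈ covSheet t (t x).2 :=
    (h.mem_open_iff (covSheet_isOpen t _)).1 (mem_covSheet_self hxt)
  have hyt : y ∈ t.source := (mem_covSheet_iff.1 hyS).1
  have hty : t y = (P y, (t x).2) := covSheet_apply hyS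
  have heq : t x = t y := by
    rw [hty, ← hPxy]
    exact Prod.ext (t.coe_fst hxt) rfl
  exact t.toOpenPartialHomeomorph.injOn hxt hyt heq

/-- A covering map with path connected total space over a second countable base has
second countable total space. -/
lemma aux_secondCountable (hP : IsCoveringMap P) [SecondCountableTopology E]
    [PathConnectedSpace E'] [PathConnectedSpace E] : SecondCountableTopology E' := by
  have hsurj : Set.range P = Set.univ := by
    refine IsClopen.eq_univ ⟨?_, hP.isOpenMap.isOpen_range⟩ (Set.range_nonempty_iff_nonempty.2 ⟨Classical.arbitrary E'⟩)
    rw [← isOpen_compl_iff]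
    refine isOpen_iff_forall_mem_open.2 fun x hx => ?_
    obtain ⟨_, U, hxU, hU, _, H, _⟩ := hP x
    refine ⟨U, fun y hyU hy => ?_, hU, hxU⟩
    obtain ⟨e, he⟩ := hy
    exact hx ⟨_, (H ⟨e, show P e ∈ U from he ▸ hyU⟩).2.2⟩
  haveI : ∀ x : E, Nonempty ↥(P ⁻¹' {x}) := fun x =>
    ⟨⟨(hsurj ▸ Set.mem_univ x : x ∈ Set.range P).choose, (hsurj ▸ Set.mem_univ x : x ∈ Set.range P).choose_spec⟩⟩
  haveI : ∀ x : E, DiscreteTopology ↥(P ⁻¹' {x}) := fun x => (hP x).1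
  set T : (x : E) → Bundle.Trivialization ↥(P ⁻¹' {x}) P := fun x => (hP x).toTrivialization with hT
  obtain ⟨s, hsc, hscov⟩ := countable_cover_nhds (f := fun x => (T x).baseSet)
    (fun x => (T x).open_baseSet.mem_nhds (hP x).mem_toTrivialization_baseSet)
  haveI := hsc.to_subtype
  let Λ : Type u := (x : ↥s) × ↥(P ⁻¹' {(x : E)})
  let Sh : Λ → Set E' := fun l => covSheet (T l.1) l.2
  have hSho : ∀ l, IsOpen (Sh l) := fun l => covSheet_isOpen _ _
  have hcov : ∀ y : E', ∃ l, y ∈ Sh l := by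
    intro y
    have hy : P y ∈ ⋃ x ∈ s, (T x).baseSet := hscov ▸ Set.mem_univ _
    simp only [Set.mem_iUnion] at hy
    obtain ⟨x, hxs, hxb⟩ := hy
    have hy : y ∈ (T x).source := (T x).mem_source.2 hxb
    exact ⟨⟨⟨x, hxs⟩, ((T x) y).2⟩, mem_covSheet_self hy⟩
  have hSc : ∀ l, SecondCountableTopology (Sh l) := fun l =>
    covSheet_secondCountable hP.continuous hP.isOpenMap _ _
  -- each sheet meets only countably many sheets
  have hadj : ∀ l : Λ, Set.Countable {m : Λ | (Sh m ∩ Sh l).Nonempty} := by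
    intro l
    haveI := hSc l
    obtain ⟨D', hD'c, hD'd⟩ := exists_countable_dense ↥(Sh l)
    haveI := hD'c.to_subtype
    have key : ∀ m : Λ, (Sh m ∩ Sh l).Nonempty → ∃ d : ↥(Sh l), d ∈ D' ∧ (d : E') ∈ Sh m := by
      intro m hm
      have ho : IsOpen (Subtype.val ⁻¹' Sh m : Set ↥(Sh l)) :=
        (hSho m).preimage continuous_subtype_val
      have hne : (Subtype.val ⁻¹' Sh m : Set ↥(Sh l)).Nonempty := by
        obtain ⟨z, hz1, hz2⟩ := hm
        exact ⟨⟨z, hz2⟩, hz1⟩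
      obtain ⟨d, hd1, hd2⟩ := hD'd.exists_mem_open ho hne
      exact ⟨d, hd1, hd2⟩
    have hsub : {m : Λ | (Sh m ∩ Sh l).Nonempty} ⊆
        ⋃ x : ↥s, Sigma.mk x '' {i | (Sh ⟨x, i⟩ ∩ Sh l).Nonempty} := by
      rintro ⟨x, i⟩ hm
      exact Set.mem_iUnion.2 ⟨x, ⟨i, hm, rfl⟩⟩
    refine Set.Countable.mono hsub (Set.countable_iUnion fun x => Set.Countable.image ?_ _)
    rw [← Set.countable_coe_iff]
    choose f hf1 hf2 using
      fun p : {i // (Sh ⟨x, i⟩ ∩ Sh l).Nonempty} => key ⟨x, p.1⟩ p.2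
    let g : {i // (Sh ⟨x, i⟩ ∩ Sh l).Nonempty} → ↥D' := fun p => ⟨f p, hf1 p⟩
    have hinj : Function.Injective g := by
      intro p q hpq
      have hfq : f p = f q := congrArg Subtype.val hpq
      have h1 : ((f p : ↥(Sh l)) : E') ∈ Sh ⟨x, p.1⟩ := hf2 p
      have h2 : ((f p : ↥(Sh l)) : E') ∈ Sh ⟨x, q.1⟩ := hfq ▸ hf2 q
      exact Subtype.ext (covSheet_eq_of_mem h1 h2)
    exact hinj.countable
  -- reachable sheets
  obtain ⟨l₀, hl₀⟩ := hcov (Classical.arbitrary E')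
  let reach : ℕ → Set Λ :=
    fun n => Nat.rec {l₀} (fun _ R => {m | ∃ l ∈ R, (Sh m ∩ Sh l).Nonempty}) n
  have hreachc : ∀ n, (reach n).Countable := by
    intro n
    induction n with
    | zero => exact Set.countable_singleton _
    | succ n ih =>
      have heq : reach (n + 1) = ⋃ l ∈ reach n, {m | (Sh m ∩ Sh l).Nonempty} := by
        ext m
        simp [reach]
      rw [heq]
      exact Set.Countable.biUnion ih fun l _ => hadj l
  set R : Set Λ := ⋃ n, reach n with hR
  have hRc : R.Countable := Set.countable_iUnion hreachc
  set W : Set E' := ⋃ l ∈ R, Sh l with hW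
  have hWo : IsOpen W := isOpen_biUnion fun l _ => hSho l
  have hWmem : ∀ {m : Λ}, m ∈ R → Sh m ⊆ W := fun hm => Set.subset_biUnion_of_mem hm
  have hWcl : IsClosed W := by
    rw [← isOpen_compl_iff]
    refine isOpen_iff_forall_mem_open.2 fun y hy => ?_
    obtain ⟨m, hym⟩ := hcov y
    refine ⟨Sh m, fun z hz hzW => hy ?_, hSho m, hym⟩
    have hzW' : ∃ l ∈ R, z ∈ Sh l := by
      simpa [hW, Set.mem_iUnion] using hzW
    obtain ⟨l, hlR, hzl⟩ := hzW'
    obtain ⟨k, hlk⟩ := Set.mem_iUnion.1 hlR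
    have hmR : m ∈ reach (k + 1) := ⟨l, hlk, ⟨z, hz, hzl⟩⟩
    exact hWmem (Set.mem_iUnion.2 ⟨k + 1, hmR⟩) hym
  have hl₀R : l₀ ∈ R := Set.mem_iUnion.2 ⟨0, rfl⟩
  have hWne : W.Nonempty := ⟨_, hWmem hl₀R hl₀⟩
  have hWuniv : W = Set.univ := IsClopen.eq_univ ⟨hWcl, hWo⟩ hWne
  haveI := hRc.to_subtype
  haveI : ∀ l : ↥R, SecondCountableTopology ↥(Sh l.1) := fun l => hSc l.1
  refine secondCountableTopology_of_countable_cover (U := fun l : ↥R => Sh l.1)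
    (fun l => hSho l.1) ?_
  rw [Set.eq_univ_iff_forall]
  intro y
  have hyW : y ∈ W := hWuniv ▸ Set.mem_univ y
  obtain ⟨l, hlR, hyl⟩ : ∃ l ∈ R, y ∈ Sh l := by
    simpa [hW, Set.mem_iUnion] using hyW
  exact Set.mem_iUnion.2 ⟨⟨l, hlR⟩, hyl⟩

end CoveringAux

/-- **Proposition 5(e).**
Let `P : E' → E` be a covering projection between path connected spaces.  If `E` is locally
path connected, separable and metrizable, then `E'` is locally path connected, separable and
metrizable. -/
theorem coveringMap_lifts_locPathConnected_separable_metrizable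
    {E' E : Type u} [TopologicalSpace E'] [TopologicalSpace E]
    [PathConnectedSpace E'] [PathConnectedSpace E]
    (P : E' → E) (hP : IsCoveringMap P)
    [LocallyPathConnectedSpace E] [TopologicalSpace.SeparableSpace E]
    [TopologicalSpace.MetrizableSpace E] :
    LocallyPathConnectedSpace E' ∧ TopologicalSpace.SeparableSpace E' ∧
      TopologicalSpace.MetrizableSpace E' := by
  haveI : SecondCountableTopology E := by
    letI := TopologicalSpace.metrizableSpaceMetric E
    exact UniformSpace.secondCountable_of_separable E
  haveI : RegularSpace E := by
    letI := TopologicalSpace.metrizableSpaceMetric E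
    infer_instance
  haveI := aux_secondCountable hP
  haveI := aux_regular hP
  haveI := aux_t0 hP
  haveI : T3Space E' := ⟨⟩
  haveI := aux_locPathConnected hP
  exact ⟨inferInstance, inferInstance, inferInstance⟩
end

section
/- Let P_X : X' → X and P_Y : Y' → Y be universal covering projections between Hausdorff, connected, locally path connected spaces. If X is homotopy equivalent to Y, then X' is homotopy equivalent to Y'. Moreover, any lifting f' : X' → Y' (with respect to P_Y) of f ∘ P_X, where f : X → Y is a homotopy equivalence, is itself a homotopy equivalence. -/
universe u v

/-- A continuous map is a homotopy equivalence if it admits a continuous map in the other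
direction such that both composites are homotopic to the identity. -/
def IsHomotopyEquivMap {X : Type u} {Y : Type v} [TopologicalSpace X] [TopologicalSpace Y]
    (f : C(X, Y)) : Prop :=
  ∃ g : C(Y, X), (g.comp f).Homotopic (ContinuousMap.id X) ∧
    (f.comp g).Homotopic (ContinuousMap.id Y)

section CPAuxSection

open unitInterval Set Filter Topology

namespace CPAux

variable {E X : Type*} [TopologicalSpace E] [TopologicalSpace X] {p : E → X}

lemma extend_lift {A : Type*} [TopologicalSpace A] {N : Set A}
    (H : C(I × A, X)) {F : Type*} [TopologicalSpace F] (T : Bundle.Trivialization F p)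
    (t₁ t₂ : I) (h12 : t₁ ≤ t₂)
    (hbase : ∀ (t : I) (a : N), t₁ ≤ t → t ≤ t₂ → H (t, (a : A)) ∈ T.baseSet)
    (f : I × N → E) (hf : Continuous f)
    (hlift : ∀ (t : I) (a : N), t ≤ t₁ → p (f (t, a)) = H (t, (a : A))) :
    ∃ f' : I × N → E, Continuous f' ∧
      (∀ (t : I) (a : N), t ≤ t₂ → p (f' (t, a)) = H (t, (a : A))) ∧
      (∀ (t : I) (a : N), t ≤ t₁ → f' (t, a) = f (t, a)) := by
  classical
  set m : I → I := fun t => min (max t t₁) t₂ with hm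
  have hmc : Continuous m := (continuous_id.max continuous_const).min continuous_const
  have hmem : ∀ (t : I) (a : N), H (m t, (a : A)) ∈ T.baseSet := fun t a =>
    hbase _ a (le_min (le_max_right _ _) h12) (min_le_right _ _)
  have hsrc : ∀ a : N, f (t₁, a) ∈ T.source := fun a =>
    T.mem_source.2 (by rw [hlift t₁ a le_rfl]; exact hbase t₁ a le_rfl h12)
  set sheet : N → F := fun a => (T (f (t₁, a))).2 with hsheet
  have hsheetc : Continuous sheet := by
    have h1 : Continuous fun a : N => f (t₁, a) :=
      hf.comp (continuous_const.prodMk continuous_id)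
    have h2 : Continuous (⇑T.toPartialHomeomorph ∘ fun a : N => f (t₁, a)) :=
      T.toPartialHomeomorph.continuousOn.comp_continuous h1 hsrc
    exact continuous_snd.comp h2
  set g : I × N → E :=
    fun z => T.toPartialHomeomorph.symm (H (m z.1, (z.2 : A)), sheet z.2) with hg
  have hgc : Continuous g := by
    apply T.toPartialHomeomorph.continuousOn_symm.comp_continuous
    · exact (H.continuous.comp ((hmc.comp continuous_fst).prodMk
        (continuous_subtype_val.comp continuous_snd))).prodMk (hsheetc.comp continuous_snd)
    · intro z; rw [T.mem_target]; exact hmem _ _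
  have hgp : ∀ z : I × N, p (g z) = H (m z.1, (z.2 : A)) := fun z =>
    T.proj_symm_apply (T.mem_target.2 (hmem _ _))
  have hagree : ∀ z : I × N, z.1 = t₁ → f z = g z := by
    rintro ⟨t, a⟩ (rfl : t = t₁)
    have hmt : m t = t := by
      rw [hm]; dsimp only; rw [max_self, min_eq_left h12]
    rw [hg]; dsimp only
    rw [hmt, ← hlift t a le_rfl, T.mk_proj_snd' (T.mem_source.1 (hsrc a))]
    exact (T.toPartialHomeomorph.left_inv (hsrc a)).symm
  refine ⟨fun z => if ((z.1 : ℝ)) ≤ ((t₁ : ℝ)) then f z else g z, ?_, ?_, ?_⟩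
  · exact Continuous.if_le hf hgc (continuous_subtype_val.comp continuous_fst)
      continuous_const (fun z hz => hagree z (Subtype.ext hz))
  · intro t a ht2
    by_cases h : (t : ℝ) ≤ (t₁ : ℝ)
    · simp only [h, if_true]; exact hlift t a h
    · simp only [h, if_false]
      have h1 : t₁ ≤ t := le_of_not_ge h
      have hmt : m t = t := by
        rw [hm]; dsimp only; rw [max_eq_left h1, min_eq_left ht2]
      rw [hgp ⟨t, a⟩, hmt]
  · intro t a ht1
    simp only [Subtype.coe_le_coe.2 ht1, if_true]

lemma isClosed_range' (hp : IsCoveringMap p) : IsClosed (Set.range p) := by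
  rw [← isOpen_compl_iff, isOpen_iff_mem_nhds]
  intro x hx
  obtain ⟨_, U, hxU, hU, -, Hm, -⟩ := hp x
  apply mem_of_superset (hU.mem_nhds hxU)
  rintro y hy ⟨e, rfl⟩
  exact hx ⟨(Hm ⟨e, hy⟩).2.1, (Hm ⟨e, hy⟩).2.2⟩

lemma exists_lift_nhds (hp : IsCoveringMap p) {A : Type*} [TopologicalSpace A]
    (H : C(I × A, X)) (Γ₀ : A → E) (hΓc : Continuous Γ₀)
    (h₀ : ∀ a, p (Γ₀ a) = H (0, a)) (a₀ : A) :
    ∃ N : Set A, N ∈ 𝓝 a₀ ∧ ∃ f : I × N → E, Continuous f ∧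
      (∀ (t : I) (a : N), p (f (t, a)) = H (t, (a : A))) ∧ ∀ a : N, f (0, a) = Γ₀ a := by
  classical
  -- product neighborhoods with trivializations along the slice I × {a₀}
  have key : ∀ t : I, ∃ (u : Set I) (v : Set A), IsOpen u ∧ IsOpen v ∧ t ∈ u ∧ a₀ ∈ v ∧
      ∃ (Fb : Type _) (_ : TopologicalSpace Fb) (T : Bundle.Trivialization Fb p),
        ∀ (s : I) (a : A), s ∈ u → a ∈ v → H (s, a) ∈ T.baseSet := by
    have hne : ∀ t : I, H (t, a₀) ∈ Set.range p := by
      have hcont : Continuous fun t : I => H (t, a₀) :=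
        H.continuous.comp (continuous_id.prodMk continuous_const)
      have hc : IsClopen ((fun t : I => H (t, a₀)) ⁻¹' Set.range p) :=
        ⟨(isClosed_range' hp).preimage hcont, hp.isOpenMap.isOpen_range.preimage hcont⟩
      have hu := hc.eq_univ ⟨0, Γ₀ a₀, h₀ a₀⟩
      intro t
      have : t ∈ (fun t : I => H (t, a₀)) ⁻¹' Set.range p := by rw [hu]; trivial
      exact this
    intro t
    obtain ⟨e, he⟩ := hne t
    haveI : Nonempty (p ⁻¹' {H (t, a₀)}) := ⟨⟨e, he⟩⟩
    set T := (hp (H (t, a₀))).toTrivialization with hT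
    have hTmem : H (t, a₀) ∈ T.baseSet := (hp (H (t, a₀))).mem_toTrivialization_baseSet
    have hO : IsOpen (H ⁻¹' T.baseSet) := T.open_baseSet.preimage H.continuous
    obtain ⟨u, v, hu, hv, htu, hav, huv⟩ := isOpen_prod_iff.1 hO t a₀ hTmem
    exact ⟨u, v, hu, hv, htu, hav, _, inferInstance, T,
      fun s a hs ha => huv (mk_mem_prod hs ha)⟩
  choose u v hu hv htu hav Fb iFb Tv huv using key
  -- Lebesgue number for the cover (u t) of I
  obtain ⟨δ, hδ, hball⟩ := lebesgue_number_lemma_of_metric isCompact_univ hu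
    (fun t _ => mem_iUnion.2 ⟨t, htu t⟩)
  obtain ⟨n, hn⟩ := exists_nat_one_div_lt hδ
  set n' : ℕ := n + 1 with hn'
  have hn'pos : (0:ℝ) < n' := by positivity
  -- the subdivision points
  have hmem : ∀ k : ℕ, k ≤ n' → (k / n' : ℝ) ∈ I := by
    intro k hk
    constructor
    · positivity
    · rw [div_le_one hn'pos]; exact_mod_cast hk
  set c : ℕ → I := fun k => Set.projIcc 0 1 zero_le_one (k / n' : ℝ) with hc
  have hck : ∀ k : ℕ, k ≤ n' → ((c k : ℝ)) = (k / n' : ℝ) := by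
    intro k hk
    rw [hc]; exact congrArg Subtype.val (Set.projIcc_of_mem zero_le_one (hmem k hk))
  -- the single neighborhood of a₀
  choose sel hsel using fun t : I => hball t (mem_univ t)
  set N : Set A := ⋂ k ∈ Finset.range n', v (sel (c k)) with hN
  have hNopen : IsOpen N := isOpen_biInter_finset fun k _ => hv _
  have haN : a₀ ∈ N := mem_iInter₂.2 fun k _ => hav _
  refine ⟨N, hNopen.mem_nhds haN, ?_⟩
  -- segment inclusion
  have hseg : ∀ k : ℕ, k < n' → ∀ (t : I) (a : N),
      (c k) ≤ t → t ≤ c (k+1) → H (t, (a : A)) ∈ (Tv (sel (c k))).baseSet := by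
    intro k hk t a h1 h2
    have hbl : t ∈ Metric.ball (c k) δ := by
      rw [Metric.mem_ball]
      have h1' : (c k : ℝ) ≤ t := h1
      have h2' : (t : ℝ) ≤ (c (k+1) : ℝ) := h2
      rw [hck k hk.le] at h1'
      rw [hck (k+1) hk] at h2'
      have hcast : ((k+1:ℕ):ℝ) = (k:ℝ) + 1 := by push_cast; ring
      rw [hcast] at h2'
      have hsum : ((k:ℝ)+1)/n' = (k:ℝ)/n' + 1/n' := by ring
      have hδ' : 1/(n':ℝ) < δ := by
        rw [hn']; push_cast; exact hn
      have : |(t : ℝ) - (c k : ℝ)| < δ := by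
        rw [hck k hk.le, abs_sub_lt_iff]
        constructor
        · linarith
        · linarith
      simpa [Subtype.dist_eq, Real.dist_eq] using this
    have htu' : t ∈ u (sel (c k)) := hsel (c k) hbl
    have haV : (a : A) ∈ v (sel (c k)) :=
      mem_iInter₂.1 (show (a : A) ∈ ⋂ j ∈ Finset.range n', v (sel (c j)) from a.2) k
        (Finset.mem_range.2 hk)
    exact huv _ t a htu' haV
  -- induction on segments
  have main : ∀ k : ℕ, k ≤ n' → ∃ f : I × N → E, Continuous f ∧
      (∀ (t : I) (a : N), (t : ℝ) ≤ k / n' → p (f (t, a)) = H (t, (a : A))) ∧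
      ∀ a : N, f (0, a) = Γ₀ a := by
    intro k hk
    induction k with
    | zero =>
      refine ⟨fun z => Γ₀ z.2, hΓc.comp (continuous_subtype_val.comp continuous_snd), ?_, fun a => rfl⟩
      intro t a ht
      have ht0 : t = 0 := by
        apply Subtype.ext
        have := t.2.1
        simp only [Nat.cast_zero, zero_div] at ht
        exact le_antisymm ht this
      rw [ht0]; exact h₀ a
    | succ k ih =>
      obtain ⟨f, hfc, hfl, hf0⟩ := ih (Nat.le_of_succ_le hk)
      have hkn : k < n' := hk
      have h12 : c k ≤ c (k+1) := by
        rw [← Subtype.coe_le_coe, hck k hkn.le, hck (k+1) hk]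
        gcongr
        exact_mod_cast Nat.le_succ k
      letI := iFb (sel (c k))
      obtain ⟨f', hf'c, hf'l, hf'e⟩ := extend_lift H (Tv (sel (c k))) (c k) (c (k+1)) h12
        (fun t a h1 h2 => hseg k hkn t a h1 h2) f hfc
        (fun t a ht => hfl t a (by rw [← hck k hkn.le]; exact ht))
      refine ⟨f', hf'c, ?_, ?_⟩
      · intro t a ht
        apply hf'l t a
        rw [← Subtype.coe_le_coe, hck (k+1) hk]
        exact ht
      · intro a
        rw [hf'e 0 a (by rw [← Subtype.coe_le_coe, hck k hkn.le]; positivity)]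
        exact hf0 a
  obtain ⟨f, hfc, hfl, hf0⟩ := main n' le_rfl
  refine ⟨f, hfc, fun t a => hfl t a ?_, hf0⟩
  rw [div_self (ne_of_gt hn'pos)]
  exact t.2.2

/-- Homotopy lifting property for covering maps. -/
theorem homotopy_lift (hp : IsCoveringMap p) {A : Type*} [TopologicalSpace A]
    (H : C(I × A, X)) (Γ₀ : C(A, E)) (h₀ : ∀ a, p (Γ₀ a) = H (0, a)) :
    ∃ Λ : C(I × A, E), (∀ z, p (Λ z) = H z) ∧ ∀ a, Λ (0, a) = Γ₀ a := by
  classical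
  choose N hN f hfc hfl hf0 using exists_lift_nhds hp H Γ₀ Γ₀.continuous h₀
  have hmem : ∀ a : A, a ∈ N a := fun a => mem_of_mem_nhds (hN a)
  set Λ : I × A → E := fun z => f z.2 (z.1, ⟨z.2, hmem z.2⟩) with hΛ
  -- slice uniqueness
  have slice : ∀ (a : A) (b : N a) (t : I),
      f a (t, b) = f (b : A) (t, ⟨(b : A), hmem _⟩) := by
    intro a b t
    have h1 : Continuous fun t : I => f a (t, b) :=
      (hfc a).comp (continuous_id.prodMk continuous_const)
    have h2 : Continuous fun t : I => f (b : A) (t, ⟨(b : A), hmem _⟩) :=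
      (hfc (b : A)).comp (continuous_id.prodMk continuous_const)
    have key := hp.eq_of_comp_eq h1 h2 (funext fun t => by
      show p (f a (t, b)) = p (f (b : A) (t, ⟨(b : A), hmem _⟩))
      rw [hfl a t b, hfl (b : A) t ⟨(b : A), hmem _⟩]) 0
      (by show f a (0, b) = f (b : A) (0, ⟨(b : A), hmem _⟩)
          rw [hf0 a b, hf0 (b : A) ⟨(b : A), hmem _⟩])
    exact congrFun key t
  have hΛc : Continuous Λ := by
    rw [continuous_iff_continuousAt]
    rintro ⟨t₀, a₀⟩
    set W := interior (N a₀) with hW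
    have hWopen : IsOpen (univ ×ˢ W : Set (I × A)) := isOpen_univ.prod isOpen_interior
    have hWmem : (t₀, a₀) ∈ univ ×ˢ W := ⟨mem_univ _, mem_interior_iff_mem_nhds.2 (hN a₀)⟩
    apply ContinuousOn.continuousAt ?_ (hWopen.mem_nhds hWmem)
    rw [continuousOn_iff_continuous_domRestrict]
    have : (univ ×ˢ W : Set (I × A)).domRestrict Λ = fun z =>
        f a₀ (z.1.1, ⟨z.1.2, interior_subset z.2.2⟩) := by
      funext z
      exact (slice a₀ ⟨(z : I × A).2, interior_subset z.2.2⟩ (z : I × A).1).symm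
    rw [this]
    exact (hfc a₀).comp ((continuous_fst.comp continuous_subtype_val).prodMk
      (Continuous.subtype_mk (continuous_snd.comp continuous_subtype_val) _))
  refine ⟨⟨Λ, hΛc⟩, fun z => ?_, fun a => ?_⟩
  · show p (f z.2 (z.1, _)) = H z
    rw [hfl z.2 z.1 ⟨z.2, hmem z.2⟩]
  · show f a (0, _) = Γ₀ a
    exact hf0 a ⟨a, hmem a⟩

/-- Path lifting. -/
theorem path_lift (hp : IsCoveringMap p) (γ : C(I, X)) (e₀ : E) (he : p e₀ = γ 0) :
    ∃ Γ : C(I, E), (∀ t, p (Γ t) = γ t) ∧ Γ 0 = e₀ := by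
  obtain ⟨Λ, hΛ, h0⟩ := homotopy_lift hp (γ.comp ⟨Prod.fst, continuous_fst⟩)
    (ContinuousMap.const Unit e₀) (fun a => he)
  exact ⟨Λ.comp ⟨fun t => (t, ()), continuous_id.prodMk continuous_const⟩,
    fun t => hΛ (t, ()), h0 ()⟩

/-- Monodromy: homotopic paths have lifts with the same endpoint. -/
theorem lift_end_eq (hp : IsCoveringMap p) {x y : X} {γ₀ γ₁ : Path x y}
    (h : γ₀.Homotopic γ₁) (e₀ : E) (Γ₀ Γ₁ : C(I, E))
    (h₀ : ∀ t, p (Γ₀ t) = γ₀ t) (h₁ : ∀ t, p (Γ₁ t) = γ₁ t)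
    (s₀ : Γ₀ 0 = e₀) (s₁ : Γ₁ 0 = e₀) : Γ₀ 1 = Γ₁ 1 := by
  obtain ⟨F⟩ := h
  set H : C(I × I, X) := F.toHomotopy.toContinuousMap with hH
  obtain ⟨Λ, hΛ, h0⟩ := homotopy_lift hp H Γ₀ (fun s => by
    rw [h₀ s]; exact (F.toHomotopy.apply_zero s).symm)
  -- the left edge is constant
  have hleft : ∀ t : I, Λ (t, 0) = e₀ := by
    intro t
    have hcont : Continuous fun t : I => Λ (t, (0 : I)) :=
      Λ.continuous.comp (continuous_id.prodMk continuous_const)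
    have hconst : ∀ t t' : I, p (Λ (t, (0:I))) = p (Λ (t', (0:I))) := by
      intro t t'
      rw [hΛ (t, 0), hΛ (t', 0)]
      show H (t, 0) = H (t', 0)
      have e1 : H (t, 0) = γ₀ 0 := F.eq_fst t (by norm_num)
      have e2 : H (t', 0) = γ₀ 0 := F.eq_fst t' (by norm_num)
      rw [e1, e2]
    have := hp.const_of_comp hcont hconst t 0
    rw [this, h0 0, s₀]
  -- the right edge is constant
  have hright : ∀ t : I, Λ (t, 1) = Γ₀ 1 := by
    intro t
    have hcont : Continuous fun t : I => Λ (t, (1 : I)) :=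
      Λ.continuous.comp (continuous_id.prodMk continuous_const)
    have hconst : ∀ t t' : I, p (Λ (t, (1:I))) = p (Λ (t', (1:I))) := by
      intro t t'
      rw [hΛ (t, 1), hΛ (t', 1)]
      show H (t, 1) = H (t', 1)
      have e1 : H (t, 1) = γ₀ 1 := F.eq_fst t (by norm_num)
      have e2 : H (t', 1) = γ₀ 1 := F.eq_fst t' (by norm_num)
      rw [e1, e2]
    have := hp.const_of_comp hcont hconst t 0
    rw [this, h0 1]
  -- the top edge is a lift of γ₁ starting at e₀
  have htop : (fun s : I => Λ (1, s)) = fun s => Γ₁ s := by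
    apply hp.eq_of_comp_eq (Λ.continuous.comp (continuous_const.prodMk continuous_id))
      Γ₁.continuous
    · funext s
      show p (Λ (1, s)) = p (Γ₁ s)
      rw [hΛ (1, s), h₁ s]
      show H (1, s) = γ₁ s
      exact F.toHomotopy.apply_one s
    · show Λ (1, 0) = Γ₁ 0
      rw [hleft 1, s₁]
  calc Γ₀ 1 = Λ (1, 1) := (hright 1).symm
    _ = Γ₁ 1 := congrFun htop 1

/-- A covering map with nonempty total space over a preconnected base is surjective. -/
theorem covering_surjective (hp : IsCoveringMap p) [PreconnectedSpace X] [Nonempty E] :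
    Function.Surjective p := by
  rw [← Set.range_eq_univ]
  apply IsClopen.eq_univ ?_ (range_nonempty p)
  constructor
  · exact isClosed_range' hp
  · exact hp.isOpenMap.isOpen_range

/-- The lifting criterion from a simply connected, locally path connected space. -/
theorem lifting_criterion (hp : IsCoveringMap p) {Z : Type*} [TopologicalSpace Z]
    [LocallyPathConnectedSpace Z] [SimplyConnectedSpace Z]
    (f : C(Z, X)) (z₀ : Z) (e₀ : E) (he : p e₀ = f z₀) :
    ∃ g : C(Z, E), (∀ z, p (g z) = f z) ∧ g z₀ = e₀ := by
  classical
  set α : ∀ z : Z, Path z₀ z := fun z => PathConnectedSpace.somePath z₀ z with hα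
  have hlift : ∀ z : Z, ∃ Γ : C(I, E), (∀ t, p (Γ t) = f (α z t)) ∧ Γ 0 = e₀ := by
    intro z
    obtain ⟨Γ, hΓ, h0⟩ := path_lift hp ((α z).map f.continuous).toContinuousMap e₀ (by
      show p e₀ = ((α z).map f.continuous) 0
      rw [Path.map_coe]
      show p e₀ = f (α z 0)
      rw [(α z).source]; exact he)
    refine ⟨Γ, fun t => ?_, h0⟩
    rw [hΓ t]
    show ((α z).map f.continuous) t = f (α z t)
    rw [Path.map_coe]; rfl
  choose Γ hΓ hΓ0 using hlift
  set g : Z → E := fun z => Γ z 1 with hg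
  have welldef : ∀ (z : Z) (c : Path z₀ z) (Θ : C(I, E)),
      (∀ t, p (Θ t) = f (c t)) → Θ 0 = e₀ → Θ 1 = g z := by
    intro z c Θ hΘ h0
    have hhom : (c.map f.continuous).Homotopic ((α z).map f.continuous) :=
      Path.Homotopic.map (SimplyConnectedSpace.paths_homotopic c (α z)) f
    refine lift_end_eq hp hhom e₀ Θ (Γ z) (fun t => ?_) (fun t => ?_) h0 (hΓ0 z)
    · rw [hΘ t, Path.map_coe]; rfl
    · rw [hΓ z t, Path.map_coe]; rfl
  have hgp : ∀ z, p (g z) = f z := fun z => by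
    rw [hg]; dsimp only; rw [hΓ z 1, (α z).target]
  have hg0 : g z₀ = e₀ := by
    have := welldef z₀ (Path.refl z₀) (ContinuousMap.const I e₀) (fun t => by
      show p e₀ = f ((Path.refl z₀) t)
      rw [Path.refl_apply]; exact he) rfl
    exact this.symm
  have hgc : Continuous g := by
    rw [continuous_iff_continuousAt]
    intro z
    haveI : Nonempty (p ⁻¹' {f z}) := ⟨⟨g z, hgp z⟩⟩
    set T := (hp (f z)).toTrivialization with hT
    have hfz : f z ∈ T.baseSet := (hp (f z)).mem_toTrivialization_baseSet
    have hW : f ⁻¹' T.baseSet ∈ 𝓝 z := (T.open_baseSet.preimage f.continuous).mem_nhds hfz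
    obtain ⟨U, ⟨hU𝓝, hUpc⟩, hUW⟩ := (path_connected_basis z).mem_iff.1 hW
    set sheet := (T (g z)).2 with hsheet
    set φ : Z → E := fun w => T.toPartialHomeomorph.symm (f w, sheet) with hφ
    have hsrcz : g z ∈ T.source := T.mem_source.2 (by rw [hgp z]; exact hfz)
    have hφz : ContinuousAt φ z := by
      have h1 : ContinuousAt (fun w => (f w, sheet)) z :=
        f.continuous.continuousAt.prodMk continuousAt_const
      refine ContinuousAt.comp ?_ h1
      exact (T.toPartialHomeomorph.continuousOn_symm).continuousAt
        (T.toOpenPartialHomeomorph.open_target.mem_nhds (T.mem_target.2 hfz))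
    have heq : ∀ w ∈ U, g w = φ w := by
      intro w hw
      have hzU : z ∈ U := mem_of_mem_nhds hU𝓝
      have hj : JoinedIn U z w := hUpc.joinedIn z hzU w hw
      set β := hj.somePath with hβdef
      have hβ : ∀ t, f (β t) ∈ T.baseSet := fun t => hUW (hj.somePath_mem t)
      have hpair : ((f z : X), sheet) = T (g z) := by
        refine Prod.ext ?_ rfl
        rw [T.coe_fst hsrcz, hgp z]
      have hΔ0 : T.toPartialHomeomorph.symm (f (β 0), sheet) = g z := by
        rw [β.source, hpair]
        exact T.toPartialHomeomorph.left_inv hsrcz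
      have hΔ1 : T.toPartialHomeomorph.symm (f (β 1), sheet) = φ w := by
        rw [β.target]
      set Δ : Path (g z) (φ w) :=
        { toFun := fun t => T.toPartialHomeomorph.symm (f (β t), sheet)
          continuous_toFun := by
            apply (T.toPartialHomeomorph.continuousOn_symm).comp_continuous
            · exact (f.continuous.comp β.continuous).prodMk continuous_const
            · intro t; exact T.mem_target.2 (hβ t)
          source' := hΔ0
          target' := hΔ1 } with hΔdef
      set Γp : Path e₀ (g z) := { toContinuousMap := Γ z, source' := hΓ0 z, target' := rfl }
        with hΓp
      set Θ : Path e₀ (φ w) := Γp.trans Δ with hΘdef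
      have hΘlift : ∀ t, p (Θ t) = f (((α z).trans β) t) := by
        intro t
        rw [hΘdef]
        rw [Path.trans_apply, Path.trans_apply]
        split_ifs with hsplit
        · exact hΓ z _
        · exact T.proj_symm_apply (T.mem_target.2 (hβ _))
      have := welldef w ((α z).trans β) ⟨Θ, Θ.continuous⟩ hΘlift Θ.source
      exact (this.symm.trans Θ.target)
    exact hφz.congr (eventually_of_mem hU𝓝 fun w hw => (heq w hw).symm)
  exact ⟨⟨g, hgc⟩, hgp, hg0⟩

/-- A lift of the identity (deck-type transformation) on a simply connected covering space
has a two-sided inverse. -/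
theorem deck_inverse (hp : IsCoveringMap p) [LocallyPathConnectedSpace E] [SimplyConnectedSpace E]
    [PreconnectedSpace E]
    (φ : C(E, E)) (hφ : ∀ e, p (φ e) = p e) :
    ∃ ψ : C(E, E), (∀ e, p (ψ e) = p e) ∧ (∀ e, ψ (φ e) = e) ∧ (∀ e, φ (ψ e) = e) := by
  obtain ⟨a⟩ : Nonempty E := inferInstance
  obtain ⟨ψ, hψp0, hψa⟩ := lifting_criterion hp ⟨p, hp.continuous⟩ (φ a) a (hφ a).symm
  have hψp : ∀ z, p (ψ z) = p z := fun z => hψp0 z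
  have he1 : p ∘ (fun e => ψ (φ e)) = p ∘ (fun e => e) := funext fun e => by
    show p (ψ (φ e)) = p e
    rw [hψp (φ e), hφ e]
  have h1 : (fun e => ψ (φ e)) = fun e => e :=
    hp.eq_of_comp_eq (ψ.continuous.comp φ.continuous) continuous_id he1 a hψa
  have he2 : p ∘ (fun e => φ (ψ e)) = p ∘ (fun e => e) := funext fun e => by
    show p (φ (ψ e)) = p e
    rw [hφ (ψ e), hψp e]
  have h2 : (fun e => φ (ψ e)) = fun e => e := by
    apply hp.eq_of_comp_eq (φ.continuous.comp ψ.continuous) continuous_id he2 (φ a)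
    show φ (ψ (φ a)) = φ a
    rw [hψa]
  exact ⟨ψ, hψp, fun e => congrFun h1 e, fun e => congrFun h2 e⟩

end CPAux

end CPAuxSection

/-- **Lemma 6 (Cacciatori–Pigola).**
Let `P_X : X' → X` and `P_Y : Y' → Y` be universal covering projections between Hausdorff,
connected, locally path connected spaces.  If `X` is homotopy equivalent to `Y`, then `X'`
is homotopy equivalent to `Y'`; moreover, any lifting `f' : X' → Y'` (with respect to `P_Y`)
of `f ∘ P_X`, where `f : X → Y` is a homotopy equivalence, is itself a homotopy
equivalence. -/
theorem univCovering_homotopyEquiv_of_homotopyEquiv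
    {X' X : Type u} {Y' Y : Type v}
    [TopologicalSpace X'] [TopologicalSpace X] [TopologicalSpace Y'] [TopologicalSpace Y]
    [T2Space X'] [T2Space X] [T2Space Y'] [T2Space Y]
    [ConnectedSpace X'] [ConnectedSpace X] [ConnectedSpace Y'] [ConnectedSpace Y]
    [LocallyPathConnectedSpace X'] [LocallyPathConnectedSpace X]
    [LocallyPathConnectedSpace Y'] [LocallyPathConnectedSpace Y]
    (P_X : X' → X) (hPX : IsCoveringMap P_X) [SimplyConnectedSpace X']
    (P_Y : Y' → Y) (hPY : IsCoveringMap P_Y) [SimplyConnectedSpace Y']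
    (hXY : Nonempty (ContinuousMap.HomotopyEquiv X Y)) :
    Nonempty (ContinuousMap.HomotopyEquiv X' Y') ∧
      ∀ f : C(X, Y), IsHomotopyEquivMap f →
        ∀ f' : C(X', Y'), (∀ x' : X', P_Y (f' x') = f (P_X x')) →
          IsHomotopyEquivMap f' := by
  have hPXs : Function.Surjective P_X := CPAux.covering_surjective hPX
  have hPYs : Function.Surjective P_Y := CPAux.covering_surjective hPY
  have main : ∀ f : C(X, Y), IsHomotopyEquivMap f →
      ∀ f' : C(X', Y'), (∀ x' : X', P_Y (f' x') = f (P_X x')) → IsHomotopyEquivMap f' := by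
    intro f hf f' hf'
    obtain ⟨g, hgf, hfg⟩ := hf
    -- construct a lift g' of g ∘ P_Y
    obtain ⟨y₀'⟩ : Nonempty Y' := inferInstance
    obtain ⟨x₀', hx₀'⟩ := hPXs (g (P_Y y₀'))
    obtain ⟨g', hg'p0, -⟩ := CPAux.lifting_criterion hPX
      (g.comp ⟨P_Y, hPY.continuous⟩) y₀' x₀' hx₀'
    have hg'p : ∀ z, P_X (g' z) = g (P_Y z) := fun z => hg'p0 z
    -- lift the homotopy g ∘ f ≃ id over X'
    obtain ⟨K⟩ := hgf
    obtain ⟨Λ, hΛp, hΛ0⟩ := CPAux.homotopy_lift hPX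
      (ContinuousMap.comp K.toContinuousMap
        ⟨fun z => (z.1, P_X z.2), (continuous_fst.prodMk (hPX.continuous.comp continuous_snd))⟩)
      (g'.comp f') (fun x' => by
        show P_X (g' (f' x')) = K (0, P_X x')
        rw [hg'p (f' x'), hf' x', K.apply_zero]
        rfl)
    set φ : C(X', X') := ⟨fun x' => Λ (1, x'), Λ.continuous.comp
      (continuous_const.prodMk continuous_id)⟩ with hφdef
    have hφp : ∀ x', P_X (φ x') = P_X x' := fun x' => by
      show P_X (Λ (1, x')) = P_X x'
      rw [hΛp (1, x')]
      show K (1, P_X x') = P_X x'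
      rw [K.apply_one]
      rfl
    have homφ : ((g'.comp f')).Homotopic φ :=
      ⟨{ toContinuousMap := Λ
         map_zero_left := fun x' => hΛ0 x'
         map_one_left := fun x' => rfl }⟩
    obtain ⟨ψ, hψp, hψφ, hφψ⟩ := CPAux.deck_inverse hPX φ hφp
    -- lift the homotopy f ∘ g ≃ id over Y'
    obtain ⟨K'⟩ := hfg
    obtain ⟨Λ', hΛ'p, hΛ'0⟩ := CPAux.homotopy_lift hPY
      (ContinuousMap.comp K'.toContinuousMap
        ⟨fun z => (z.1, P_Y z.2), (continuous_fst.prodMk (hPY.continuous.comp continuous_snd))⟩)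
      (f'.comp g') (fun y' => by
        show P_Y (f' (g' y')) = K' (0, P_Y y')
        rw [hf' (g' y'), hg'p y', K'.apply_zero]
        rfl)
    set φ' : C(Y', Y') := ⟨fun y' => Λ' (1, y'), Λ'.continuous.comp
      (continuous_const.prodMk continuous_id)⟩ with hφ'def
    have hφ'p : ∀ y', P_Y (φ' y') = P_Y y' := fun y' => by
      show P_Y (Λ' (1, y')) = P_Y y'
      rw [hΛ'p (1, y')]
      show K' (1, P_Y y') = P_Y y'
      rw [K'.apply_one]
      rfl
    have homφ' : ((f'.comp g')).Homotopic φ' :=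
      ⟨{ toContinuousMap := Λ'
         map_zero_left := fun y' => hΛ'0 y'
         map_one_left := fun y' => rfl }⟩
    obtain ⟨ψ', hψ'p, hψ'φ', hφ'ψ'⟩ := CPAux.deck_inverse hPY φ' hφ'p
    -- left homotopy inverse
    set l : C(Y', X') := ψ.comp g' with hl
    have hleft : (l.comp f').Homotopic (ContinuousMap.id X') := by
      rw [hl, ContinuousMap.comp_assoc]
      have h1 : (ψ.comp (g'.comp f')).Homotopic (ψ.comp φ) :=
        ContinuousMap.Homotopic.comp (ContinuousMap.Homotopic.refl ψ) homφ
      have h2 : ψ.comp φ = ContinuousMap.id X' := ContinuousMap.ext fun x' => hψφ x'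
      rw [h2] at h1
      exact h1
    -- right homotopy inverse
    set r : C(Y', X') := g'.comp ψ' with hr
    have hright : (f'.comp r).Homotopic (ContinuousMap.id Y') := by
      rw [hr, ← ContinuousMap.comp_assoc]
      have h1 : ((f'.comp g').comp ψ').Homotopic (φ'.comp ψ') :=
        ContinuousMap.Homotopic.comp homφ' (ContinuousMap.Homotopic.refl ψ')
      have h2 : φ'.comp ψ' = ContinuousMap.id Y' := ContinuousMap.ext fun y' => hφ'ψ' y'
      rw [h2] at h1
      exact h1
    -- r is a two-sided homotopy inverse
    have hrl : r.Homotopic l := by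
      have c2 : ((l.comp f').comp r).Homotopic ((ContinuousMap.id X').comp r) :=
        ContinuousMap.Homotopic.comp hleft (ContinuousMap.Homotopic.refl r)
      rw [ContinuousMap.comp_assoc, ContinuousMap.id_comp] at c2
      have c3 : (l.comp (f'.comp r)).Homotopic (l.comp (ContinuousMap.id Y')) :=
        ContinuousMap.Homotopic.comp (ContinuousMap.Homotopic.refl l) hright
      rw [ContinuousMap.comp_id] at c3
      exact c2.symm.trans c3
    have hrf : (r.comp f').Homotopic (ContinuousMap.id X') :=
      (ContinuousMap.Homotopic.comp hrl (ContinuousMap.Homotopic.refl f')).trans hleft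
    exact ⟨r, hrf, hright⟩
  refine ⟨?_, main⟩
  obtain ⟨eqv⟩ := hXY
  have hf : IsHomotopyEquivMap eqv.toFun := ⟨eqv.invFun, eqv.left_inv, eqv.right_inv⟩
  obtain ⟨x₀'⟩ : Nonempty X' := inferInstance
  obtain ⟨y₀', hy₀'⟩ := hPYs (eqv.toFun (P_X x₀'))
  obtain ⟨f', hf'p, -⟩ := CPAux.lifting_criterion hPY
    (eqv.toFun.comp ⟨P_X, hPX.continuous⟩) x₀' y₀' hy₀'
  obtain ⟨r, h1, h2⟩ := main eqv.toFun hf f' (fun x' => hf'p x')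
  exact ⟨⟨f', r, h1, h2⟩⟩
end
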